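/- arXiv:1608.08529 — 3 statements merged into one kernel-verified Lean document; each statement's English description precedes it below -/
import Mathlib

section
/- Let n ≥ 2 be a natural number, let g : [a,b] → ℝ be continuous with g ≥ 0, and let h₁,…,hₙ be nonnegative functions on [a,b] all belonging to D₊[a,b] (or all to D₋[a,b]). Let α ≤ n/(n-1) and let f : [a,b] → ℝ be strictly positive and (n-1)-times differentiable with f⁽ⁱ⁾ ≥ 0 for i = 1,…,n-1 and (n+1-α)·f⁽ⁿ⁻¹⁾·f^{n(1-α)} ≥ n!·h₁·h₂²·…·hₙⁿ on [a,b]. Suppose {1,…,n} is partitioned into disjoint sets I and J such that: (i) g·∏_{i∈I} hᵢ is increasing on [a,b]; (ii) for each k = 1,…,n-1 the function (∏_{i∈I} hᵢⁱ)·(∏_{j∈J, j≥k+1} hⱼ^{j-k}) is decreasing on [a,b]; (iii) for each k = 0,…,n-2 the function ∏_{j∈J, j≤k+1} hⱼ^{k+1-j} is increasing on [a,b]. Set M := inf{g(x) : x ∈ [a,b]}, mᵢ := inf{hᵢ(x) : x ∈ [a,b]} for i = 1,…,n, and K := f(a)^{n+1} if α ≥ 0, K := f(a)^{n+1-α}·f(b)^{α}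 if α < 0. Then (b-a)·K·Mⁿ·∏_{i=1}^{n} mᵢ^{n-i} + (∫_a^b f^{α}·g·∏_{i=1}^{n} hᵢ)ⁿ ≤ ∫_a^b f^{n+1}·gⁿ·∏_{i=1}^{n} hᵢ^{n-i}. -/
open MeasureTheory Set intervalIntegral

/-- `D₊[a,b]`: continuous functions on `[a,b]` having a right-derivative at every
point of `(a,b)`. -/
def DPlus (a b : ℝ) (h : ℝ → ℝ) : Prop :=
  ContinuousOn h (Set.Icc a b) ∧ ∀ x ∈ Set.Ioo a b, ∃ L : ℝ, HasDerivWithinAt h L (Set.Ioi x) x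

/-- `D₋[a,b]`: continuous functions on `[a,b]` having a left-derivative at every
point of `(a,b)`. -/
def DMinus (a b : ℝ) (h : ℝ → ℝ) : Prop :=
  ContinuousOn h (Set.Icc a b) ∧ ∀ x ∈ Set.Ioo a b, ∃ L : ℝ, HasDerivWithinAt h L (Set.Iio x) x

set_option maxHeartbeats 4000000 in
theorem stmt0 (a b : ℝ) (hab : a < b) (n : ℕ) (hn : 2 ≤ n)
    (g : ℝ → ℝ) (hg_cont : ContinuousOn g (Set.Icc a b))
    (hg_nonneg : ∀ x ∈ Set.Icc a b, 0 ≤ g x)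
    (h : ℕ → ℝ → ℝ)
    (hD : (∀ i ∈ Finset.Icc 1 n, DPlus a b (h i)) ∨ (∀ i ∈ Finset.Icc 1 n, DMinus a b (h i)))
    (hh_nonneg : ∀ i ∈ Finset.Icc 1 n, ∀ x ∈ Set.Icc a b, 0 ≤ h i x)
    (α : ℝ) (hα : α ≤ (n : ℝ) / ((n : ℝ) - 1))
    (f : ℝ → ℝ) (hf_pos : ∀ x ∈ Set.Icc a b, 0 < f x)
    (hf_diff : ∀ i < n - 1,
      DifferentiableOn ℝ (iteratedDerivWithin i f (Set.Icc a b)) (Set.Icc a b))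
    (hf_nonneg : ∀ i, 1 ≤ i → i ≤ n - 1 → ∀ x ∈ Set.Icc a b,
      0 ≤ iteratedDerivWithin i f (Set.Icc a b) x)
    (hgrowth : ∀ x ∈ Set.Icc a b,
      (n.factorial : ℝ) * ∏ i ∈ Finset.Icc 1 n, h i x ^ i ≤
        ((n : ℝ) + 1 - α) * iteratedDerivWithin (n - 1) f (Set.Icc a b) x *
          f x ^ ((n : ℝ) * (1 - α)))
    (I J : Finset ℕ) (hIJ : Disjoint I J) (hIJunion : I ∪ J = Finset.Icc 1 n)
    (hi : MonotoneOn (fun x => g x * ∏ i ∈ I, h i x) (Set.Icc a b))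
    (hii : ∀ k, 1 ≤ k → k ≤ n - 1 →
      AntitoneOn (fun x => (∏ i ∈ I, h i x ^ i) *
        ∏ j ∈ J.filter (fun j => k + 1 ≤ j), h j x ^ (j - k)) (Set.Icc a b))
    (hiii : ∀ k ≤ n - 2,
      MonotoneOn (fun x => ∏ j ∈ J.filter (fun j => j ≤ k + 1), h j x ^ (k + 1 - j))
        (Set.Icc a b)) :
    (b - a) *
        (if 0 ≤ α then f a ^ (n + 1) else f a ^ ((n : ℝ) + 1 - α) * f b ^ α) *
        sInf (g '' Set.Icc a b) ^ n *
        ∏ i ∈ Finset.Icc 1 n, sInf (h i '' Set.Icc a b) ^ (n - i) +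
      (∫ x in a..b, f x ^ α * g x * ∏ i ∈ Finset.Icc 1 n, h i x) ^ n ≤
    ∫ x in a..b, f x ^ (n + 1) * g x ^ n * ∏ i ∈ Finset.Icc 1 n, h i x ^ (n - i) := by
  obtain ⟨p, rfl⟩ : ∃ p, n = p + 2 := ⟨n - 2, by omega⟩
  clear hn
  have hab' : a ≤ b := hab.le
  -- numeric facts
  have hp1 : (0:ℝ) < (p:ℝ) + 1 := by positivity
  have hα1 : α * ((p : ℝ) + 1) ≤ (p : ℝ) + 2 := by
    have h2 : ((p + 2 : ℕ) : ℝ) - 1 = (p : ℝ) + 1 := by push_cast; ring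
    rw [h2] at hα
    have := (le_div_iff₀ hp1).mp hα
    push_cast at this; linarith
  have hkα : ∀ m : ℕ, (m:ℝ) ≤ (p:ℝ) + 1 → 0 ≤ ((p:ℝ) + 2) - (m:ℝ) * α := by
    intro m hm
    rcases le_or_gt α 0 with hc | hc
    · have h0 : (0:ℝ) ≤ (m:ℝ) := Nat.cast_nonneg m
      nlinarith
    · nlinarith
  have hn1α : 0 < ((p:ℝ) + 3) - α := by nlinarith
  -- basic f facts
  have hIcc2 : p + 2 - 1 = p + 1 := by omega
  rw [hIcc2] at hf_diff hf_nonneg hgrowth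
  rw [show p + 2 - 2 = p from by omega] at hiii
  set Ic := Set.Icc a b with hIcdef
  have hudIc : UniqueDiffOn ℝ Ic := uniqueDiffOn_Icc hab
  have hfds : ∀ m, m ≤ p → DifferentiableOn ℝ (iteratedDerivWithin m f Ic) Ic :=
    fun m hm => hf_diff m (by omega)
  have hfd0 : iteratedDerivWithin 0 f Ic = f := iteratedDerivWithin_zero
  have hfc : ContinuousOn f Ic := by
    have := (hfds 0 (by omega)).continuousOn; rwa [hfd0] at this
  have hmemIc : ∀ {x t : ℝ}, x ∈ Ic → t ∈ Set.Icc a x → t ∈ Ic :=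
    fun hx ht => ⟨ht.1, ht.2.trans hx.2⟩
  have hderiv : ∀ m, m ≤ p → ∀ x ∈ Set.Ioo a b,
      HasDerivAt (iteratedDerivWithin m f Ic) (iteratedDerivWithin (m+1) f Ic x) x := by
    intro m hm x hx
    have hIcnb : Ic ∈ nhds x := Icc_mem_nhds hx.1 hx.2
    have hxI : x ∈ Ic := Ioo_subset_Icc_self hx
    have hdx : DifferentiableWithinAt ℝ (iteratedDerivWithin m f Ic) Ic x := hfds m hm x hxI
    have hda : DifferentiableAt ℝ (iteratedDerivWithin m f Ic) x := hdx.differentiableAt hIcnb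
    have heq : iteratedDerivWithin (m+1) f Ic x = derivWithin (iteratedDerivWithin m f Ic) Ic x :=
      by rw [iteratedDerivWithin_succ]
    rw [heq, derivWithin_of_mem_nhds hIcnb]
    exact hda.hasDerivAt
  have hfd' : ∀ x ∈ Set.Ioo a b, HasDerivAt f (iteratedDerivWithin 1 f Ic x) x := by
    intro x hx
    have := hderiv 0 (by omega) x hx; rwa [hfd0] at this
  have hfdnn : ∀ m, m ≤ p + 1 → ∀ x ∈ Ic, 0 ≤ iteratedDerivWithin m f Ic x := by
    intro m hm x hx
    rcases Nat.eq_zero_or_pos m with hm0 | hm0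
    · subst hm0; rw [hfd0]; exact (hf_pos x hx).le
    · exact hf_nonneg m (by omega) (by omega) x hx
  have hfmono : MonotoneOn f Ic := by
    apply monotoneOn_of_deriv_nonneg (convex_Icc a b) hfc
    · intro x hx
      rw [interior_Icc] at hx
      exact (hfd' x hx).differentiableAt.differentiableWithinAt
    · intro x hx
      rw [interior_Icc] at hx
      rw [(hfd' x hx).deriv]
      exact hfdnn 1 (by omega) x (Ioo_subset_Icc_self hx)
  have haIc : a ∈ Ic := ⟨le_refl a, hab'⟩
  have hbIc : b ∈ Ic := ⟨hab', le_refl b⟩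
  have hfax : ∀ x ∈ Ic, f a ≤ f x := fun x hx => hfmono haIc hx hx.1
  have hfxb : ∀ x ∈ Ic, f x ≤ f b := fun x hx => hfmono hx hbIc hx.2
  -- h facts
  set FIc := Finset.Icc 1 (p + 2) with hFIcdef
  have hhc : ∀ i ∈ FIc, ContinuousOn (h i) Ic := by
    rcases hD with hD | hD
    · exact fun i hi => (hD i hi).1
    · exact fun i hi => (hD i hi).1
  have hJle : J ⊆ FIc := hIJunion ▸ Finset.subset_union_right
  have hIle : I ⊆ FIc := hIJunion ▸ Finset.subset_union_left
  have hmemFIc : ∀ i ∈ FIc, 1 ≤ i ∧ i ≤ p + 2 := by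
    intro i hi; rw [hFIcdef, Finset.mem_Icc] at hi; exact hi
  -- the product functions
  set Q : ℝ → ℝ := fun x => ∏ j ∈ J, h j x with hQdef
  set P : ℝ → ℝ := fun x => ∏ i ∈ I, h i x with hPdef
  set Z : ℕ → ℝ → ℝ := fun k x => (∏ i ∈ I, h i x ^ i) *
    ∏ j ∈ J.filter (fun j => k + 1 ≤ j), h j x ^ (j - k) with hZdef
  set W : ℕ → ℝ → ℝ := fun k x => ∏ j ∈ J.filter (fun j => j ≤ k + 1), h j x ^ (k + 1 - j)
    with hWdef
  set ψ : ℝ → ℝ := fun x => f x ^ α * Q x with hψdef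
  have hφeq0 : ∀ x : ℝ, f x ^ α * g x * ∏ i ∈ FIc, h i x = g x * P x * ψ x := by
    intro x
    have : ∏ i ∈ FIc, h i x = P x * Q x := by
      rw [hPdef, hQdef, ← hIJunion, Finset.prod_union hIJ]
    rw [this, hψdef, hPdef, hQdef]; ring
  set φ : ℝ → ℝ := fun x => f x ^ α * g x * ∏ i ∈ FIc, h i x with hφdef
  set v : ℝ → ℝ := fun x => ∫ t in a..x, ψ t with hvdef
  set u : ℝ → ℝ := fun x => ∫ t in a..x, φ t with hudef
  set Y : ℝ → ℝ := fun x => ∏ i ∈ FIc, h i x ^ (p + 2 - i) with hYdef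
  set X₁ : ℝ → ℝ := fun x => (∏ i ∈ I, h i x ^ (p + 2)) * Q x with hX₁def
  -- monotone data
  have hZanti : ∀ k, 1 ≤ k → k ≤ p + 1 → AntitoneOn (Z k) Ic := fun k h1 h2 => hii k h1 h2
  have hWmono : ∀ k, k ≤ p → MonotoneOn (W k) Ic := fun k hk => hiii k hk
  have hgP : MonotoneOn (fun x => g x * P x) Ic := hi
  -- nonnegativity
  have hhnn : ∀ i ∈ FIc, ∀ x ∈ Ic, 0 ≤ h i x := hh_nonneg
  have hQnn : ∀ x ∈ Ic, 0 ≤ Q x := fun x hx =>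
    Finset.prod_nonneg fun j hj => hhnn j (hJle hj) x hx
  have hPnn : ∀ x ∈ Ic, 0 ≤ P x := fun x hx =>
    Finset.prod_nonneg fun i hi => hhnn i (hIle hi) x hx
  have hZnn : ∀ k, ∀ x ∈ Ic, 0 ≤ Z k x := fun k x hx =>
    mul_nonneg (Finset.prod_nonneg fun i hi => pow_nonneg (hhnn i (hIle hi) x hx) _)
      (Finset.prod_nonneg fun j hj =>
        pow_nonneg (hhnn j (hJle (Finset.mem_filter.mp hj).1) x hx) _)
  have hWnn : ∀ k, ∀ x ∈ Ic, 0 ≤ W k x := fun k x hx =>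
    Finset.prod_nonneg fun j hj =>
      pow_nonneg (hhnn j (hJle (Finset.mem_filter.mp hj).1) x hx) _
  have hYnn : ∀ x ∈ Ic, 0 ≤ Y x := fun x hx =>
    Finset.prod_nonneg fun i hi => pow_nonneg (hhnn i hi x hx) _
  have hX₁nn : ∀ x ∈ Ic, 0 ≤ X₁ x := fun x hx =>
    mul_nonneg (Finset.prod_nonneg fun i hi => pow_nonneg (hhnn i (hIle hi) x hx) _) (hQnn x hx)
  have hfrpow_nn : ∀ (e : ℝ), ∀ x ∈ Ic, 0 ≤ f x ^ e := fun e x hx =>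
    Real.rpow_nonneg (hf_pos x hx).le e
  have hψnn : ∀ x ∈ Ic, 0 ≤ ψ x := fun x hx =>
    mul_nonneg (hfrpow_nn α x hx) (hQnn x hx)
  have hgPnn : ∀ x ∈ Ic, 0 ≤ g x * P x := fun x hx =>
    mul_nonneg (hg_nonneg x hx) (hPnn x hx)
  have hφnn : ∀ x ∈ Ic, 0 ≤ φ x := by
    intro x hx
    rw [hφdef]; dsimp only
    rw [hφeq0 x]
    exact mul_nonneg (hgPnn x hx) (hψnn x hx)
  -- continuity
  have hprodc : ∀ (s : Finset ℕ), (s ⊆ FIc) → ∀ (e : ℕ → ℕ),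
      ContinuousOn (fun x => ∏ j ∈ s, h j x ^ e j) Ic := by
    intro s hs e
    induction s using Finset.induction_on with
    | empty => simpa using continuousOn_const
    | @insert j s hnotmem ih =>
      rw [Finset.insert_subset_iff] at hs
      have := ((hhc j hs.1).pow (e j)).mul (ih hs.2)
      refine this.congr fun x _ => ?_
      simp [Finset.prod_insert hnotmem]
  have hQc : ContinuousOn Q Ic := by
    have := hprodc J hJle (fun _ => 1); simpa [hQdef] using this
  have hPc : ContinuousOn P Ic := by
    have := hprodc I hIle (fun _ => 1); simpa [hPdef] using this
  have hZc : ∀ k, ContinuousOn (Z k) Ic := fun k =>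
    (hprodc I hIle (fun i => i)).mul
      (hprodc (J.filter (fun j => k + 1 ≤ j)) ((Finset.filter_subset _ _).trans hJle) _)
  have hWc : ∀ k, ContinuousOn (W k) Ic := fun k =>
    hprodc (J.filter (fun j => j ≤ k + 1)) ((Finset.filter_subset _ _).trans hJle) _
  have hYc : ContinuousOn Y Ic := hprodc FIc (le_refl _) _
  have hX₁c : ContinuousOn X₁ Ic := (hprodc I hIle (fun _ => p + 2)).mul hQc
  have hfrc : ∀ e : ℝ, ContinuousOn (fun x => f x ^ e) Ic := fun e =>
    hfc.rpow_const (fun x hx => Or.inl (hf_pos x hx).ne')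
  have hψc : ContinuousOn ψ Ic := (hfrc α).mul hQc
  have hφc : ContinuousOn φ Ic := ((hfrc α).mul hg_cont).mul (hprodc FIc (le_refl _) (fun _ => 1) |>.congr (by intro x hx; simp))
  -- filter helper
  have hfilt : ∀ (Pr : ℕ → Prop) (inst : DecidablePred Pr) (e : ℕ → ℕ) (x : ℝ),
      ∏ j ∈ J.filter Pr, h j x ^ e j = ∏ j ∈ J, h j x ^ (if Pr j then e j else 0) := by
    intro Pr inst e x
    rw [Finset.prod_filter]
    exact Finset.prod_congr rfl fun j _ => by split <;> simp
  have hJbound : ∀ j ∈ J, 1 ≤ j ∧ j ≤ p + 2 := fun j hj => hmemFIc j (hJle hj)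
  have hIbound : ∀ i ∈ I, 1 ≤ i ∧ i ≤ p + 2 := fun i hi => hmemFIc i (hIle hi)
  have hQpow : ∀ x : ℝ, Q x = ∏ j ∈ J, h j x ^ 1 := by intro x; simp [hQdef]
  -- identity: H = Q * Z 1
  have idH : ∀ x : ℝ, ∏ i ∈ FIc, h i x ^ i = Q x * Z 1 x := by
    intro x
    rw [← hIJunion, Finset.prod_union hIJ, hZdef]
    dsimp only
    rw [hfilt _ _ _ x, hQpow x]
    have hL : (∏ j ∈ J, h j x ^ 1) *
        ((∏ i ∈ I, h i x ^ i) * ∏ j ∈ J, h j x ^ (if 1 + 1 ≤ j then j - 1 else 0)) =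
        (∏ i ∈ I, h i x ^ i) *
        ∏ j ∈ J, (h j x ^ 1 * h j x ^ (if 1 + 1 ≤ j then j - 1 else 0)) := by
      rw [Finset.prod_mul_distrib]; ring
    rw [hL]
    refine congrArg _ (Finset.prod_congr rfl fun j hj => ?_)
    rw [← pow_add]
    congr 1
    have := (hJbound j hj).1
    split_ifs <;> omega
  -- identity: Q * Z (m+2) * W m = Z (m+1) * W (m+1)
  have idk : ∀ (m : ℕ) (x : ℝ), Q x * Z (m+2) x * W m x = Z (m+1) x * W (m+1) x := by
    intro m x
    rw [hZdef, hWdef]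
    dsimp only
    rw [hfilt _ _ _ x, hfilt _ _ _ x, hfilt _ _ _ x, hfilt _ _ _ x, hQpow x]
    have hL : (∏ j ∈ J, h j x ^ 1) *
        ((∏ i ∈ I, h i x ^ i) * ∏ j ∈ J, h j x ^ (if m + 2 + 1 ≤ j then j - (m+2) else 0)) *
        ∏ j ∈ J, h j x ^ (if j ≤ m + 1 then m + 1 - j else 0) =
        (∏ i ∈ I, h i x ^ i) * ∏ j ∈ J, (h j x ^ 1 *
          h j x ^ (if m + 2 + 1 ≤ j then j - (m+2) else 0) *
          h j x ^ (if j ≤ m + 1 then m + 1 - j else 0)) := by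
      rw [Finset.prod_mul_distrib, Finset.prod_mul_distrib]; ring
    rw [hL]
    have hR : ∀ j, h j x ^ 1 * h j x ^ (if m + 2 + 1 ≤ j then j - (m+2) else 0) *
        h j x ^ (if j ≤ m + 1 then m + 1 - j else 0) =
        h j x ^ (if m + 1 + 1 ≤ j then j - (m+1) else 0) *
        h j x ^ (if j ≤ m + 1 + 1 then m + 1 + 1 - j else 0) := by
      intro j
      rw [← pow_add, ← pow_add, ← pow_add]
      congr 1
      split_ifs <;> omega
    calc (∏ i ∈ I, h i x ^ i) * ∏ j ∈ J, (h j x ^ 1 *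
          h j x ^ (if m + 2 + 1 ≤ j then j - (m+2) else 0) *
          h j x ^ (if j ≤ m + 1 then m + 1 - j else 0))
        = (∏ i ∈ I, h i x ^ i) * ∏ j ∈ J,
            (h j x ^ (if m + 1 + 1 ≤ j then j - (m+1) else 0) *
             h j x ^ (if j ≤ m + 1 + 1 then m + 1 + 1 - j else 0)) := by
          exact congrArg _ (Finset.prod_congr rfl fun j _ => hR j)
      _ = (∏ i ∈ I, h i x ^ i) * ((∏ j ∈ J, h j x ^ (if m + 1 + 1 ≤ j then j - (m+1) else 0)) *
            ∏ j ∈ J, h j x ^ (if j ≤ m + 1 + 1 then m + 1 + 1 - j else 0)) := by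
          rw [Finset.prod_mul_distrib]
      _ = _ := by ring
  -- identity: Y * Z (p+1) = X₁ * W p
  have idTop : ∀ x : ℝ, Y x * Z (p+1) x = X₁ x * W p x := by
    intro x
    rw [hYdef, hZdef, hWdef, hX₁def]
    dsimp only
    rw [← hIJunion, Finset.prod_union hIJ, hfilt _ _ _ x, hfilt _ _ _ x, hQpow x]
    have hL : ((∏ i ∈ I, h i x ^ (p + 2 - i)) * ∏ j ∈ J, h j x ^ (p + 2 - j)) *
        ((∏ i ∈ I, h i x ^ i) * ∏ j ∈ J, h j x ^ (if p + 1 + 1 ≤ j then j - (p+1) else 0)) =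
        (∏ i ∈ I, (h i x ^ (p + 2 - i) * h i x ^ i)) *
        ∏ j ∈ J, (h j x ^ (p + 2 - j) * h j x ^ (if p + 1 + 1 ≤ j then j - (p+1) else 0)) := by
      rw [Finset.prod_mul_distrib, Finset.prod_mul_distrib]; ring
    rw [hL]
    have hI2 : (∏ i ∈ I, (h i x ^ (p + 2 - i) * h i x ^ i)) = ∏ i ∈ I, h i x ^ (p + 2) := by
      refine Finset.prod_congr rfl fun i hi => ?_
      rw [← pow_add]
      congr 1
      have := (hIbound i hi).2
      omega
    have hJ2 : (∏ j ∈ J, (h j x ^ (p + 2 - j) * h j x ^ (if p + 1 + 1 ≤ j then j - (p+1) else 0)))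
        = ∏ j ∈ J, (h j x ^ 1 * h j x ^ (if j ≤ p + 1 then p + 1 - j else 0)) := by
      refine Finset.prod_congr rfl fun j hj => ?_
      rw [← pow_add, ← pow_add]
      congr 1
      have := (hJbound j hj).2
      split_ifs <;> omega
    rw [hI2, hJ2, Finset.prod_mul_distrib]
    ring
  -- W 0 = 1
  have hW0 : ∀ x : ℝ, W 0 x = 1 := by
    intro x
    rw [hWdef]
    refine Finset.prod_eq_one fun j hj => ?_
    rw [Finset.mem_filter] at hj
    have h1 := (hJbound j hj.1).1
    have : 0 + 1 - j = 0 := by omega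
    rw [this, pow_zero]
  -- if W m x = 0 then Q x = 0
  have hWzeroQ : ∀ (m : ℕ) (x : ℝ), W m x = 0 → Q x = 0 := by
    intro m x h0
    rw [hWdef] at h0
    obtain ⟨j, hj, hje⟩ := Finset.prod_eq_zero_iff.mp h0
    rw [Finset.mem_filter] at hj
    rcases Nat.eq_zero_or_pos (m + 1 - j) with he | he
    · rw [he, pow_zero] at hje; norm_num at hje
    · have : h j x = 0 := pow_eq_zero_iff (by omega) |>.mp hje
      exact Finset.prod_eq_zero hj.1 this
  have hWzeroX : ∀ x : ℝ, W p x = 0 → X₁ x = 0 := by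
    intro x h0
    rw [hX₁def]; dsimp only
    rw [hWzeroQ p x h0, mul_zero]
  -- integrability helpers
  have hSub : ∀ x ∈ Ic, Set.uIcc a x ⊆ Ic := by
    intro x hx
    rw [Set.uIcc_of_le hx.1]
    exact Set.Icc_subset_Icc le_rfl hx.2
  have hInt : ∀ (F : ℝ → ℝ), ContinuousOn F Ic → ∀ x ∈ Ic, IntervalIntegrable F volume a x :=
    fun F hF x hx => (hF.mono (hSub x hx)).intervalIntegrable
  -- v facts
  have hvc : ContinuousOn v Ic := by
    rw [hvdef]
    have : IntegrableOn ψ (Set.uIcc a b) volume := by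
      rw [Set.uIcc_of_le hab']; exact hψc.integrableOn_Icc
    have := intervalIntegral.continuousOn_primitive_interval this
    rwa [Set.uIcc_of_le hab'] at this
  have hv0 : v a = 0 := integral_same
  have hvnn : ∀ x ∈ Ic, 0 ≤ v x := fun x hx =>
    intervalIntegral.integral_nonneg hx.1 (fun t ht => hψnn t (hmemIc hx ht))
  have hprim_deriv : ∀ (F : ℝ → ℝ), ContinuousOn F Ic → ∀ x ∈ Set.Ioo a b,
      HasDerivAt (fun y => ∫ t in a..y, F t) (F x) x := by
    intro F hF x hx
    refine intervalIntegral.integral_hasDerivAt_right (hInt F hF x (Set.Ioo_subset_Icc_self hx))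
      ?_ (hF.continuousAt (Icc_mem_nhds hx.1 hx.2))
    exact ContinuousOn.stronglyMeasurableAtFilter isOpen_Ioo
      (hF.mono Set.Ioo_subset_Icc_self) x hx
  have hvd : ∀ x ∈ Set.Ioo a b, HasDerivAt v (ψ x) x := fun x hx => hprim_deriv ψ hψc x hx
  -- u facts
  have huc : ContinuousOn u Ic := by
    rw [hudef]
    have : IntegrableOn φ (Set.uIcc a b) volume := by
      rw [Set.uIcc_of_le hab']; exact hφc.integrableOn_Icc
    have := intervalIntegral.continuousOn_primitive_interval this
    rwa [Set.uIcc_of_le hab'] at this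
  have hu0 : u a = 0 := integral_same
  have hunn : ∀ x ∈ Ic, 0 ≤ u x := fun x hx =>
    intervalIntegral.integral_nonneg hx.1 (fun t ht => hφnn t (hmemIc hx ht))
  have hud : ∀ x ∈ Set.Ioo a b, HasDerivAt u (φ x) x := fun x hx => hprim_deriv φ hφc x hx
  -- power FTC for v
  have hvpow : ∀ x ∈ Ic, ∀ k : ℕ, v x ^ (k+1) = ∫ t in a..x, (((k:ℝ)+1) * (v t ^ k * ψ t)) := by
    intro x hx k
    have hIccsub : Set.Icc a x ⊆ Ic := Set.Icc_subset_Icc le_rfl hx.2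
    have hcont : ContinuousOn (fun t => v t ^ (k+1)) (Set.Icc a x) :=
      (hvc.mono hIccsub).pow (k+1)
    have hder : ∀ t ∈ Set.Ioo a x, HasDerivAt (fun t => v t ^ (k+1))
        (((k:ℝ)+1) * (v t ^ k * ψ t)) t := by
      intro t ht
      have htb : t ∈ Set.Ioo a b := ⟨ht.1, lt_of_lt_of_le ht.2 hx.2⟩
      have h1 := (hvd t htb).pow (k+1)
      have : ((k+1 : ℕ) : ℝ) * v t ^ (k + 1 - 1) * ψ t = ((k:ℝ)+1) * (v t ^ k * ψ t) := by
        rw [Nat.add_sub_cancel]; push_cast; ring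
      rwa [this] at h1
    have hint : IntervalIntegrable (fun t => ((k:ℝ)+1) * (v t ^ k * ψ t)) volume a x :=
      hInt _ (continuousOn_const.mul ((hvc.pow k).mul hψc)) x hx
    have := intervalIntegral.integral_eq_sub_of_hasDerivAt_of_le hx.1 hcont hder hint
    rw [this, hv0]
    simp
  have hupow : ∀ x ∈ Ic, ∀ k : ℕ, u x ^ (k+1) = ∫ t in a..x, (((k:ℝ)+1) * (u t ^ k * φ t)) := by
    intro x hx k
    have hIccsub : Set.Icc a x ⊆ Ic := Set.Icc_subset_Icc le_rfl hx.2
    have hcont : ContinuousOn (fun t => u t ^ (k+1)) (Set.Icc a x) :=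
      (huc.mono hIccsub).pow (k+1)
    have hder : ∀ t ∈ Set.Ioo a x, HasDerivAt (fun t => u t ^ (k+1))
        (((k:ℝ)+1) * (u t ^ k * φ t)) t := by
      intro t ht
      have htb : t ∈ Set.Ioo a b := ⟨ht.1, lt_of_lt_of_le ht.2 hx.2⟩
      have h1 := (hud t htb).pow (k+1)
      have : ((k+1 : ℕ) : ℝ) * u t ^ (k + 1 - 1) * φ t = ((k:ℝ)+1) * (u t ^ k * φ t) := by
        rw [Nat.add_sub_cancel]; push_cast; ring
      rwa [this] at h1
    have hint : IntervalIntegrable (fun t => ((k:ℝ)+1) * (u t ^ k * φ t)) volume a x :=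
      hInt _ (continuousOn_const.mul ((huc.pow k).mul hφc)) x hx
    have := intervalIntegral.integral_eq_sub_of_hasDerivAt_of_le hx.1 hcont hder hint
    rw [this, hu0]
    simp
  -- u ≤ gP * v
  have hu_le : ∀ x ∈ Ic, u x ≤ (g x * P x) * v x := by
    intro x hx
    have h1 : u x = ∫ t in a..x, (g t * P t) * ψ t := by
      rw [hudef]
      refine intervalIntegral.integral_congr fun t _ => ?_
      rw [hφdef]; dsimp only; rw [hφeq0 t]
    have h2 : (∫ t in a..x, (g t * P t) * ψ t) ≤ ∫ t in a..x, (g x * P x) * ψ t := by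
      refine intervalIntegral.integral_mono_on hx.1
        (hInt _ ((hg_cont.mul hPc).mul hψc) x hx)
        (hInt _ (continuousOn_const.mul hψc) x hx) fun t ht => ?_
      have htI := hmemIc hx ht
      exact mul_le_mul_of_nonneg_right (hgP htI hx ht.2) (hψnn t htI)
    rw [h1]
    calc (∫ t in a..x, (g t * P t) * ψ t) ≤ ∫ t in a..x, (g x * P x) * ψ t := h2
      _ = (g x * P x) * v x := by rw [intervalIntegral.integral_const_mul, hvdef]
  -- INT1
  have INT1 : ∀ (m : ℕ), m ≤ p → ∀ (e : ℝ), 0 ≤ e → ∀ (ψ₀ : ℝ → ℝ), ContinuousOn ψ₀ Ic →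
      (∀ t ∈ Ic, 0 ≤ ψ₀ t) →
      (∀ t ∈ Ic, ψ₀ t ≤ ((p:ℝ)+3-α) * iteratedDerivWithin (m+1) f Ic t * f t ^ e) →
      ∀ x ∈ Ic, (∫ t in a..x, ψ₀ t) ≤ ((p:ℝ)+3-α) * iteratedDerivWithin m f Ic x * f x ^ e := by
    intro m hm e he ψ₀ hψ₀c hψ₀nn hψ₀le x hx
    set F : ℝ → ℝ := fun y =>
      ((p:ℝ)+3-α) * iteratedDerivWithin m f Ic y * f y ^ e - ∫ t in a..y, ψ₀ t with hFdef
    have hIccsub : Set.Icc a x ⊆ Ic := Set.Icc_subset_Icc le_rfl hx.2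
    have hFc : ContinuousOn F (Set.Icc a x) := by
      apply ContinuousOn.sub
      · exact ((continuousOn_const.mul ((hfds m hm).continuousOn.mono hIccsub)).mul
          ((hfrc e).mono hIccsub))
      · have : IntegrableOn ψ₀ (Set.uIcc a x) volume := by
          rw [Set.uIcc_of_le hx.1]; exact (hψ₀c.mono hIccsub).integrableOn_Icc
        have := intervalIntegral.continuousOn_primitive_interval this
        rwa [Set.uIcc_of_le hx.1] at this
    have hFd : ∀ y ∈ Set.Ioo a x, HasDerivAt F
        (((p:ℝ)+3-α) * (iteratedDerivWithin (m+1) f Ic y * f y ^ e +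
          iteratedDerivWithin m f Ic y * (iteratedDerivWithin 1 f Ic y * e * f y ^ (e-1))) -
          ψ₀ y) y := by
      intro y hy
      have hyb : y ∈ Set.Ioo a b := ⟨hy.1, lt_of_lt_of_le hy.2 hx.2⟩
      have hyI : y ∈ Ic := Set.Ioo_subset_Icc_self hyb
      have hd1 : HasDerivAt (fun y => ((p:ℝ)+3-α) * iteratedDerivWithin m f Ic y * f y ^ e)
          (((p:ℝ)+3-α) * (iteratedDerivWithin (m+1) f Ic y * f y ^ e +
            iteratedDerivWithin m f Ic y * (iteratedDerivWithin 1 f Ic y * e * f y ^ (e-1)))) y := by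
        have hda : HasDerivAt (fun y => iteratedDerivWithin m f Ic y) (iteratedDerivWithin (m+1) f Ic y) y :=
          hderiv m hm y hyb
        have hdb : HasDerivAt (fun y => f y ^ e) (iteratedDerivWithin 1 f Ic y * e * f y ^ (e-1)) y :=
          (hfd' y hyb).rpow_const (Or.inl (hf_pos y hyI).ne')
        have := ((hda.mul hdb).const_mul (((p:ℝ)+3-α)))
        have h3 : (fun y => ((p:ℝ)+3-α) * iteratedDerivWithin m f Ic y * f y ^ e) =
            fun y => ((p:ℝ)+3-α) * (iteratedDerivWithin m f Ic y * f y ^ e) := by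
          funext y; ring
        rw [h3]
        exact this
      have hd2 : HasDerivAt (fun y => ∫ t in a..y, ψ₀ t) (ψ₀ y) y := hprim_deriv ψ₀ hψ₀c y hyb
      exact hd1.sub hd2
    have hmono : MonotoneOn F (Set.Icc a x) := by
      apply monotoneOn_of_deriv_nonneg (convex_Icc a x) hFc
      · intro y hy
        rw [interior_Icc] at hy
        exact (hFd y hy).differentiableAt.differentiableWithinAt
      · intro y hy
        rw [interior_Icc] at hy
        rw [(hFd y hy).deriv]
        have hyI : y ∈ Ic := hIccsub (Set.Ioo_subset_Icc_self hy)
        have t1 : ψ₀ y ≤ ((p:ℝ)+3-α) * iteratedDerivWithin (m+1) f Ic y * f y ^ e := hψ₀le y hyI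
        have t2 : 0 ≤ ((p:ℝ)+3-α) * (iteratedDerivWithin m f Ic y *
            (iteratedDerivWithin 1 f Ic y * e * f y ^ (e-1))) := by
          apply mul_nonneg hn1α.le
          apply mul_nonneg (hfdnn m (by omega) y hyI)
          apply mul_nonneg (mul_nonneg (hfdnn 1 (by omega) y hyI) he)
          exact hfrpow_nn _ y hyI
        nlinarith [t1, t2]
    have hfin := hmono (Set.left_mem_Icc.mpr hx.1) (Set.right_mem_Icc.mpr hx.1) hx.1
    rw [hFdef] at hfin
    dsimp only at hfin
    rw [intervalIntegral.integral_same] at hfin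
    have hFa : 0 ≤ ((p:ℝ)+3-α) * iteratedDerivWithin m f Ic a * f a ^ e :=
      mul_nonneg (mul_nonneg hn1α.le (hfdnn m (by omega) a haIc)) (hfrpow_nn e a haIc)
    linarith
  -- INT2
  have INT2 : ∀ (ψ₀ : ℝ → ℝ), ContinuousOn ψ₀ Ic → (∀ t ∈ Ic, 0 ≤ ψ₀ t) →
      (∀ t ∈ Ic, ψ₀ t ≤ ((p:ℝ)+3-α) * iteratedDerivWithin 1 f Ic t * f t ^ ((p:ℝ)+2-α)) →
      ∀ x ∈ Ic, (∫ t in a..x, ψ₀ t) ≤ f x ^ ((p:ℝ)+3-α) - f a ^ ((p:ℝ)+3-α) := by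
    intro ψ₀ hψ₀c hψ₀nn hψ₀le x hx
    set F : ℝ → ℝ := fun y => f y ^ ((p:ℝ)+3-α) - ∫ t in a..y, ψ₀ t with hFdef
    have hIccsub : Set.Icc a x ⊆ Ic := Set.Icc_subset_Icc le_rfl hx.2
    have hFc : ContinuousOn F (Set.Icc a x) := by
      apply ContinuousOn.sub
      · exact (hfrc _).mono hIccsub
      · have : IntegrableOn ψ₀ (Set.uIcc a x) volume := by
          rw [Set.uIcc_of_le hx.1]; exact (hψ₀c.mono hIccsub).integrableOn_Icc
        have := intervalIntegral.continuousOn_primitive_interval this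
        rwa [Set.uIcc_of_le hx.1] at this
    have hFd : ∀ y ∈ Set.Ioo a x, HasDerivAt F
        (iteratedDerivWithin 1 f Ic y * ((p:ℝ)+3-α) * f y ^ ((p:ℝ)+2-α) - ψ₀ y) y := by
      intro y hy
      have hyb : y ∈ Set.Ioo a b := ⟨hy.1, lt_of_lt_of_le hy.2 hx.2⟩
      have hyI : y ∈ Ic := Set.Ioo_subset_Icc_self hyb
      have hd1 : HasDerivAt (fun y => f y ^ ((p:ℝ)+3-α))
          (iteratedDerivWithin 1 f Ic y * ((p:ℝ)+3-α) * f y ^ ((p:ℝ)+3-α-1)) y :=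
        (hfd' y hyb).rpow_const (Or.inl (hf_pos y hyI).ne')
      have he : (p:ℝ)+3-α-1 = (p:ℝ)+2-α := by ring
      rw [he] at hd1
      exact hd1.sub (hprim_deriv ψ₀ hψ₀c y hyb)
    have hmono : MonotoneOn F (Set.Icc a x) := by
      apply monotoneOn_of_deriv_nonneg (convex_Icc a x) hFc
      · intro y hy
        rw [interior_Icc] at hy
        exact (hFd y hy).differentiableAt.differentiableWithinAt
      · intro y hy
        rw [interior_Icc] at hy
        rw [(hFd y hy).deriv]
        have hyI : y ∈ Ic := hIccsub (Set.Ioo_subset_Icc_self hy)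
        have := hψ₀le y hyI
        nlinarith [this]
    have hfin := hmono (Set.left_mem_Icc.mpr hx.1) (Set.right_mem_Icc.mpr hx.1) hx.1
    rw [hFdef] at hfin
    dsimp only at hfin
    rw [intervalIntegral.integral_same] at hfin
    linarith
  -- real-exponent fact
  have hkα' : ∀ r : ℝ, 0 ≤ r → r ≤ (p:ℝ)+1 → 0 ≤ (p:ℝ)+2 - r*α := by
    intro r h0 h1
    rcases le_or_gt α 0 with hc | hc
    · nlinarith
    · nlinarith
  -- the Psi chain
  set Ek : ℕ → ℝ := fun k => (p:ℝ)+2-((p:ℝ)+2-(k:ℝ))*α with hEkdef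
  have hEknn : ∀ k : ℕ, 1 ≤ k → k ≤ p+2 → 0 ≤ Ek k := by
    intro k h1 h2
    rw [hEkdef]
    refine hkα' _ ?_ ?_
    · have : (k:ℝ) ≤ (p:ℝ)+2 := by exact_mod_cast Nat.cast_le.mpr h2
      linarith
    · have : (1:ℝ) ≤ (k:ℝ) := by exact_mod_cast Nat.one_le_cast.mpr h1
      linarith
  set Psi : ℕ → ℝ → ℝ := fun k x => if k = p + 1 then
      f x ^ ((p:ℝ)+3-α) - f a ^ ((p:ℝ)+3-α)
    else ((p:ℝ)+3-α) * iteratedDerivWithin (p+1-k) f Ic x * f x ^ (Ek k) with hPsidef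
  set c : ℕ → ℝ := fun k => ((p+2).factorial : ℝ) / (k.factorial : ℝ) with hcdef
  have hcpos : ∀ k : ℕ, 0 < c k := by
    intro k; rw [hcdef]; dsimp only
    apply div_pos
    · exact_mod_cast Nat.factorial_pos (p+2)
    · exact_mod_cast Nat.factorial_pos k
  have hcsucc : ∀ k : ℕ, c (k+1) * ((k:ℝ)+1) = c k := by
    intro k; rw [hcdef]; dsimp only
    have h3 : (((k+1).factorial : ℝ)) = ((k:ℝ)+1) * (k.factorial : ℝ) := by
      rw [Nat.factorial_succ]; push_cast; ring
    have h1 : ((k.factorial : ℝ)) ≠ 0 := by exact_mod_cast (Nat.factorial_pos k).ne'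
    have h2 : ((k:ℝ)+1) ≠ 0 := by positivity
    rw [h3]
    field_simp
  have hcp1 : c (p+1) = (p:ℝ)+2 := by
    rw [hcdef]; dsimp only
    have h3 : (((p+2).factorial : ℝ)) = ((p:ℝ)+2) * ((p+1).factorial : ℝ) := by
      rw [show p + 2 = (p+1) + 1 from rfl, Nat.factorial_succ]; push_cast; ring
    have h1 : (((p+1).factorial : ℝ)) ≠ 0 := by exact_mod_cast (Nat.factorial_pos (p+1)).ne'
    rw [h3]
    field_simp
  have hPsinn : ∀ k, k ≤ p+1 → ∀ x ∈ Ic, 0 ≤ Psi k x := by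
    intro k hk x hx
    rw [hPsidef]; dsimp only
    split_ifs with hkp
    · have := Real.rpow_le_rpow (hf_pos a haIc).le (hfax x hx) hn1α.le
      linarith
    · exact mul_nonneg (mul_nonneg hn1α.le (hfdnn (p+1-k) (by omega) x hx))
        (hfrpow_nn _ x hx)
  have hPsic : ∀ k, 1 ≤ k → k ≤ p → ContinuousOn (Psi k) Ic := by
    intro k h1 h2
    have hkp : k ≠ p+1 := by omega
    rw [hPsidef]
    simp only [if_neg hkp]
    exact (continuousOn_const.mul ((hfds (p+1-k) (by omega)).continuousOn)).mul (hfrc _)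
  -- THE KEY INDUCTION
  have key : ∀ k, 1 ≤ k → k ≤ p + 1 → ∀ x ∈ Ic, c k * v x ^ k * Z k x ≤ Psi k x * W (k-1) x := by
    intro k hk1
    induction k, hk1 using Nat.le_induction with
    | base =>
      intro _ x hx
      rw [show (1:ℕ) - 1 = 0 from rfl, hW0 x, mul_one, pow_one]
      -- pointwise bound for the integrand
      have hptwise : ∀ t ∈ Ic, c 1 * (ψ t * Z 1 t) ≤
          ((p:ℝ)+3-α) * iteratedDerivWithin (p+1) f Ic t * f t ^ (Ek 1) := by
        intro t htI
        have hgr := hgrowth t htI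
        rw [idH t] at hgr
        have hc1 : c 1 = ((p+2).factorial : ℝ) := by
          rw [hcdef]; simp [Nat.factorial_one]
        have hfα := hfrpow_nn α t htI
        have hmul := mul_le_mul_of_nonneg_right hgr hfα
        have e2 : c 1 * (ψ t * Z 1 t) = (((p+2).factorial : ℝ) * (Q t * Z 1 t)) * f t ^ α := by
          rw [hc1, hψdef]; dsimp only; ring
        have e3 : (((p+2:ℕ):ℝ)+1-α) * iteratedDerivWithin (p+1) f Ic t *
              f t ^ (((p+2:ℕ):ℝ)*(1-α)) * f t ^ α =
            ((p:ℝ)+3-α) * iteratedDerivWithin (p+1) f Ic t * f t ^ (Ek 1) := by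
          rw [mul_assoc, ← Real.rpow_add (hf_pos t htI), hEkdef]
          dsimp only
          rw [show ((p+2:ℕ):ℝ)*(1-α) + α = (p:ℝ)+2-((p:ℝ)+2-((1:ℕ):ℝ))*α from by push_cast; ring]
          push_cast
          ring
        rw [e2]
        rw [e3] at hmul
        exact hmul
      have hcont : ContinuousOn (fun t => c 1 * (ψ t * Z 1 t)) Ic :=
        continuousOn_const.mul (hψc.mul (hZc 1))
      have hnn : ∀ t ∈ Ic, 0 ≤ c 1 * (ψ t * Z 1 t) := fun t htI =>
        mul_nonneg (hcpos 1).le (mul_nonneg (hψnn t htI) (hZnn 1 t htI))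
      -- step 1 : pull the antitone Z 1 into the integral
      have hstep1 : c 1 * v x * Z 1 x ≤ ∫ t in a..x, c 1 * (ψ t * Z 1 t) := by
        have e1 : c 1 * v x * Z 1 x = ∫ t in a..x, c 1 * (ψ t * Z 1 x) := by
          rw [intervalIntegral.integral_const_mul, intervalIntegral.integral_mul_const, hvdef]
          ring
        rw [e1]
        refine intervalIntegral.integral_mono_on hx.1
          (hInt _ (continuousOn_const.mul (hψc.mul continuousOn_const)) x hx)
          (hInt _ hcont x hx) fun t ht => ?_
        have htI := hmemIc hx ht
        have hZle : Z 1 x ≤ Z 1 t := hZanti 1 le_rfl (by omega) htI hx ht.2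
        calc c 1 * (ψ t * Z 1 x) = (c 1 * ψ t) * Z 1 x := by ring
          _ ≤ (c 1 * ψ t) * Z 1 t :=
            mul_le_mul_of_nonneg_left hZle (mul_nonneg (hcpos 1).le (hψnn t htI))
          _ = c 1 * (ψ t * Z 1 t) := by ring
      -- step 2 : apply the integral bounds
      rcases Nat.eq_zero_or_pos p with hp0 | hp0
      · -- n = 2 : top case directly
        have h1p : (1:ℕ) = p + 1 := by omega
        have hPsi1 : Psi 1 x = f x ^ ((p:ℝ)+3-α) - f a ^ ((p:ℝ)+3-α) := by
          rw [hPsidef]; dsimp only; rw [if_pos h1p]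
        rw [hPsi1]
        have hcast : (p:ℝ) = 0 := by exact_mod_cast hp0
        have hfd1 : p + 1 = 1 := by omega
        have hEk1 : Ek 1 = (p:ℝ)+2-α := by
          rw [hEkdef]; dsimp only; rw [hcast]; push_cast; ring
        refine le_trans hstep1 (INT2 _ hcont hnn ?_ x hx)
        intro t htI
        have := hptwise t htI
        rwa [hfd1, hEk1] at this
      · have h1p : (1:ℕ) ≠ p + 1 := by omega
        have hPsi1 : Psi 1 x = ((p:ℝ)+3-α) * iteratedDerivWithin p f Ic x * f x ^ (Ek 1) := by
          rw [hPsidef]; dsimp only; rw [if_neg h1p, show p + 1 - 1 = p from by omega]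
        rw [hPsi1]
        calc c 1 * v x * Z 1 x ≤ ∫ t in a..x, c 1 * (ψ t * Z 1 t) := hstep1
          _ ≤ _ := by
            exact INT1 p le_rfl (Ek 1) (hEknn 1 le_rfl (by omega)) _ hcont hnn hptwise x hx
    | succ k hk ih =>
      intro hk2 x hx
      have hkp : k ≤ p := by omega
      rw [show k + 1 - 1 = k from by omega]
      have ih' := ih (by omega)
      -- pointwise inequality under the integral
      have hptwise : ∀ t ∈ Ic, c k * (v t ^ k * (ψ t * Z (k+1) t)) ≤
          (f t ^ α * Psi k t) * W k t := by
        intro t htI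
        have hRnn : 0 ≤ (f t ^ α * Psi k t) * W k t :=
          mul_nonneg (mul_nonneg (hfrpow_nn α t htI) (hPsinn k (by omega) t htI))
            (hWnn k t htI)
        rcases eq_or_lt_of_le (hWnn (k-1) t htI) with hW0' | hWpos
        · have hQ0 : Q t = 0 := hWzeroQ (k-1) t hW0'.symm
          have hψ0 : ψ t = 0 := by rw [hψdef]; dsimp only; rw [hQ0, mul_zero]
          rw [hψ0]
          simpa using hRnn
        · have hih := ih' t htI
          have hmul := mul_le_mul_of_nonneg_right hih
            (mul_nonneg (hfrpow_nn α t htI) (hWnn k t htI))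
          have hidk := idk (k-1) t
          rw [show k-1+2 = k+1 from by omega, show k-1+1 = k from by omega] at hidk
          rw [← mul_le_mul_iff_of_pos_right hWpos]
          calc c k * (v t ^ k * (ψ t * Z (k+1) t)) * W (k-1) t
              = (c k * v t ^ k * Z k t) * (f t ^ α * W k t) := by
                rw [hψdef]; dsimp only
                linear_combination (c k * v t ^ k * f t ^ α) * hidk
            _ ≤ (Psi k t * W (k-1) t) * (f t ^ α * W k t) := hmul
            _ = (f t ^ α * Psi k t) * W k t * W (k-1) t := by ring
      -- continuity bits
      have hPsikc : ContinuousOn (Psi k) Ic := hPsic k (by omega) hkp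
      have hc1 : ContinuousOn (fun t => c k * (v t ^ k * (ψ t * Z (k+1) t))) Ic :=
        continuousOn_const.mul ((hvc.pow k).mul (hψc.mul (hZc (k+1))))
      have hc2 : ContinuousOn (fun t => (f t ^ α * Psi k t) * W k t) Ic :=
        ((hfrc α).mul hPsikc).mul (hWc k)
      have hc3 : ContinuousOn (fun t => f t ^ α * Psi k t) Ic := (hfrc α).mul hPsikc
      have hnn3 : ∀ t ∈ Ic, 0 ≤ f t ^ α * Psi k t := fun t htI =>
        mul_nonneg (hfrpow_nn α t htI) (hPsinn k (by omega) t htI)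
      -- main chain
      have hchain : c (k+1) * v x ^ (k+1) * Z (k+1) x ≤
          (∫ t in a..x, f t ^ α * Psi k t) * W k x := by
        calc c (k+1) * v x ^ (k+1) * Z (k+1) x
            = ∫ t in a..x, c k * (v t ^ k * ψ t) * Z (k+1) x := by
              rw [hvpow x hx k,
                show c (k+1) * (∫ t in a..x, ((k:ℝ)+1) * (v t ^ k * ψ t)) * Z (k+1) x =
                  (c (k+1) * Z (k+1) x) * ∫ t in a..x, ((k:ℝ)+1) * (v t ^ k * ψ t) from by ring,
                ← intervalIntegral.integral_const_mul]
              refine intervalIntegral.integral_congr fun t _ => ?_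
              rw [← hcsucc k]; ring
          _ ≤ ∫ t in a..x, c k * (v t ^ k * (ψ t * Z (k+1) t)) := by
              refine intervalIntegral.integral_mono_on hx.1
                (hInt _ ((continuousOn_const.mul ((hvc.pow k).mul hψc)).mul
                  continuousOn_const) x hx)
                (hInt _ hc1 x hx) fun t ht => ?_
              have htI := hmemIc hx ht
              have hZle : Z (k+1) x ≤ Z (k+1) t := hZanti (k+1) (by omega) (by omega) htI hx ht.2
              calc c k * (v t ^ k * ψ t) * Z (k+1) x
                  ≤ c k * (v t ^ k * ψ t) * Z (k+1) t :=
                    mul_le_mul_of_nonneg_left hZle (mul_nonneg (hcpos k).le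
                      (mul_nonneg (pow_nonneg (hvnn t htI) k) (hψnn t htI)))
                _ = c k * (v t ^ k * (ψ t * Z (k+1) t)) := by ring
          _ ≤ ∫ t in a..x, (f t ^ α * Psi k t) * W k t := by
              refine intervalIntegral.integral_mono_on hx.1 (hInt _ hc1 x hx)
                (hInt _ hc2 x hx) fun t ht => hptwise t (hmemIc hx ht)
          _ ≤ ∫ t in a..x, (f t ^ α * Psi k t) * W k x := by
              refine intervalIntegral.integral_mono_on hx.1 (hInt _ hc2 x hx)
                (hInt _ (hc3.mul continuousOn_const) x hx) fun t ht => ?_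
              have htI := hmemIc hx ht
              exact mul_le_mul_of_nonneg_left (hWmono k hkp htI hx ht.2) (hnn3 t htI)
          _ = (∫ t in a..x, f t ^ α * Psi k t) * W k x := by
              rw [intervalIntegral.integral_mul_const]
      refine hchain.trans (mul_le_mul_of_nonneg_right ?_ (hWnn k x hx))
      -- ∫ f^α Psi k ≤ Psi (k+1) x
      have hknep : k ≠ p + 1 := by omega
      have hPsik_eval : ∀ t, Psi k t =
          ((p:ℝ)+3-α) * iteratedDerivWithin (p+1-k) f Ic t * f t ^ (Ek k) := by
        intro t; rw [hPsidef]; dsimp only; rw [if_neg hknep]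
      by_cases hk1p : k + 1 = p + 1
      · -- top step : k = p
        have hkp' : k = p := by omega
        have hPsik1 : Psi (k+1) x = f x ^ ((p:ℝ)+3-α) - f a ^ ((p:ℝ)+3-α) := by
          rw [hPsidef]; dsimp only; rw [if_pos hk1p]
        rw [hPsik1]
        refine INT2 _ hc3 hnn3 ?_ x hx
        intro t htI
        rw [hPsik_eval t, hkp', show p + 1 - p = 1 from by omega]
        have heq : f t ^ α * (((p:ℝ)+3-α) * iteratedDerivWithin 1 f Ic t * f t ^ (Ek p)) =
            ((p:ℝ)+3-α) * iteratedDerivWithin 1 f Ic t * f t ^ ((p:ℝ)+2-α) := by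
          rw [show ((p:ℝ)+2-α) = Ek p + α from by rw [hEkdef]; dsimp only; push_cast; ring]
          rw [Real.rpow_add (hf_pos t htI)]
          ring
        rw [heq]
      · -- middle step : k + 1 ≤ p
        have hk1le : k + 1 ≤ p := by omega
        have hPsik1 : Psi (k+1) x =
            ((p:ℝ)+3-α) * iteratedDerivWithin (p-k) f Ic x * f x ^ (Ek (k+1)) := by
          rw [hPsidef]; dsimp only; rw [if_neg hk1p, show p + 1 - (k+1) = p - k from by omega]
        rw [hPsik1]
        refine INT1 (p-k) (by omega) (Ek (k+1)) (hEknn (k+1) (by omega) (by omega)) _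
          hc3 hnn3 ?_ x hx
        intro t htI
        rw [hPsik_eval t, show p - k + 1 = p + 1 - k from by omega]
        have heq : f t ^ α * (((p:ℝ)+3-α) * iteratedDerivWithin (p+1-k) f Ic t * f t ^ (Ek k)) =
            ((p:ℝ)+3-α) * iteratedDerivWithin (p+1-k) f Ic t * f t ^ (Ek (k+1)) := by
          rw [show Ek (k+1) = Ek k + α from by rw [hEkdef]; dsimp only; push_cast; ring]
          rw [Real.rpow_add (hf_pos t htI)]
          ring
        rw [heq]
  -- the spade inequality
  have hspade : ∀ x ∈ Ic, ((p:ℝ)+2) * v x ^ (p+1) * X₁ x ≤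
      (f x ^ ((p:ℝ)+3-α) - f a ^ ((p:ℝ)+3-α)) * Y x := by
    intro x hx
    have hkey := key (p+1) (by omega) (by omega) x hx
    rw [hcp1] at hkey
    have hPsitop : Psi (p+1) x = f x ^ ((p:ℝ)+3-α) - f a ^ ((p:ℝ)+3-α) := by
      rw [hPsidef]; dsimp only; rw [if_pos rfl]
    rw [hPsitop, show p+1-1 = p from by omega] at hkey
    rcases eq_or_lt_of_le (hWnn p x hx) with hW0' | hWpos
    · have hX0 : X₁ x = 0 := hWzeroX x hW0'.symm
      rw [hX0, mul_zero]
      refine mul_nonneg ?_ (hYnn x hx)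
      have := hPsinn (p+1) le_rfl x hx
      rwa [hPsitop] at this
    · rw [← mul_le_mul_iff_of_pos_right hWpos]
      calc ((p:ℝ)+2) * v x ^ (p+1) * X₁ x * W p x
          = ((p:ℝ)+2) * v x ^ (p+1) * Z (p+1) x * Y x := by
            linear_combination (-(((p:ℝ)+2) * v x ^ (p+1))) * (idTop x)
        _ ≤ ((f x ^ ((p:ℝ)+3-α) - f a ^ ((p:ℝ)+3-α)) * W p x) * Y x :=
            mul_le_mul_of_nonneg_right hkey (hYnn x hx)
        _ = (f x ^ ((p:ℝ)+3-α) - f a ^ ((p:ℝ)+3-α)) * Y x * W p x := by ring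
  -- infima facts
  set M := sInf (g '' Ic) with hMdef
  have hMnn : 0 ≤ M := Real.sInf_nonneg (by rintro y ⟨t, ht, rfl⟩; exact hg_nonneg t ht)
  have hMle : ∀ x ∈ Ic, M ≤ g x := fun x hx =>
    csInf_le ⟨0, by rintro y ⟨t, ht, rfl⟩; exact hg_nonneg t ht⟩ ⟨x, hx, rfl⟩
  have hmnn : ∀ i ∈ FIc, 0 ≤ sInf (h i '' Ic) := fun i hi =>
    Real.sInf_nonneg (by rintro y ⟨t, ht, rfl⟩; exact hhnn i hi t ht)
  have hmle : ∀ i ∈ FIc, ∀ x ∈ Ic, sInf (h i '' Ic) ≤ h i x := fun i hi x hx =>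
    csInf_le ⟨0, by rintro y ⟨t, ht, rfl⟩; exact hhnn i hi t ht⟩ ⟨x, hx, rfl⟩
  -- the constant K
  set Kc := if 0 ≤ α then f a ^ (p + 2 + 1) else f a ^ (((p + 2 : ℕ) : ℝ) + 1 - α) * f b ^ α
    with hKcdef
  have hKnn : 0 ≤ Kc := by
    rw [hKcdef]; split_ifs
    · exact pow_nonneg (hf_pos a haIc).le _
    · exact mul_nonneg (hfrpow_nn _ a haIc) (hfrpow_nn α b hbIc)
  have hKle : ∀ x ∈ Ic, Kc ≤ f a ^ ((p:ℝ)+3-α) * f x ^ α := by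
    intro x hx
    rw [hKcdef]; split_ifs with hα0
    · have e1 : f a ^ (p+2+1) = f a ^ ((p:ℝ)+3-α) * f a ^ α := by
        rw [← Real.rpow_natCast (f a) (p+2+1),
          show ((p+2+1:ℕ):ℝ) = ((p:ℝ)+3-α)+α from by push_cast; ring,
          Real.rpow_add (hf_pos a haIc)]
      rw [e1]
      exact mul_le_mul_of_nonneg_left
        (Real.rpow_le_rpow (hf_pos a haIc).le (hfax x hx) hα0) (hfrpow_nn _ a haIc)
    · rw [show ((p+2:ℕ):ℝ) + 1 - α = (p:ℝ)+3-α from by push_cast; ring]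
      exact mul_le_mul_of_nonneg_left
        (Real.rpow_le_rpow_of_nonpos (hf_pos x hx) (hfxb x hx) (le_of_not_ge hα0))
        (hfrpow_nn _ a haIc)
  set C₀ := Kc * M ^ (p+2) * ∏ i ∈ FIc, sInf (h i '' Ic) ^ (p + 2 - i) with hC₀def
  have hC₀nn : 0 ≤ C₀ := by
    rw [hC₀def]
    exact mul_nonneg (mul_nonneg hKnn (pow_nonneg hMnn _))
      (Finset.prod_nonneg fun i hi => pow_nonneg (hmnn i hi) _)
  -- the main pointwise inequality
  have hmain : ∀ x ∈ Ic, C₀ + ((p:ℝ)+2) * (u x ^ (p+1) * φ x) ≤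
      f x ^ (p+2+1) * g x ^ (p+2) * Y x := by
    intro x hx
    have hgpow : M ^ (p+2) ≤ g x ^ (p+2) := pow_le_pow_left₀ hMnn (hMle x hx) _
    have hgnnx := hg_nonneg x hx
    have hYx := hYnn x hx
    have hprodle : (∏ i ∈ FIc, sInf (h i '' Ic) ^ (p+2-i)) ≤ Y x := by
      rw [hYdef]
      exact Finset.prod_le_prod (fun i hi => pow_nonneg (hmnn i hi) _)
        (fun i hi => pow_le_pow_left₀ (hmnn i hi) (hmle i hi x hx) _)
    have e1 : C₀ ≤ Kc * (g x ^ (p+2) * Y x) := by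
      rw [hC₀def]
      calc Kc * M ^ (p+2) * ∏ i ∈ FIc, sInf (h i '' Ic) ^ (p + 2 - i)
          ≤ Kc * g x ^ (p+2) * Y x := by
            apply mul_le_mul (mul_le_mul le_rfl hgpow (pow_nonneg hMnn _) hKnn) hprodle
              (Finset.prod_nonneg fun i hi => pow_nonneg (hmnn i hi) _)
              (mul_nonneg hKnn (pow_nonneg hgnnx _))
        _ = Kc * (g x ^ (p+2) * Y x) := by ring
    have hu1 : u x ^ (p+1) ≤ (g x * P x) ^ (p+1) * v x ^ (p+1) := by
      rw [← mul_pow]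
      exact pow_le_pow_left₀ (hunn x hx) (hu_le x hx) _
    have hφx : φ x = (g x * P x) * ψ x := by rw [hφdef]; dsimp only; rw [hφeq0 x]
    have e2 : ((p:ℝ)+2) * (u x ^ (p+1) * φ x) ≤
        ((p:ℝ)+2) * v x ^ (p+1) * X₁ x * (g x ^ (p+2) * f x ^ α) := by
      calc ((p:ℝ)+2) * (u x ^ (p+1) * φ x)
          ≤ ((p:ℝ)+2) * (((g x * P x) ^ (p+1) * v x ^ (p+1)) * ((g x * P x) * ψ x)) := by
            rw [hφx]
            refine mul_le_mul_of_nonneg_left ?_ (by positivity)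
            exact mul_le_mul_of_nonneg_right hu1 (mul_nonneg (hgPnn x hx) (hψnn x hx))
        _ = ((p:ℝ)+2) * v x ^ (p+1) * ((P x ^ (p+2)) * Q x) * (g x ^ (p+2) * f x ^ α) := by
            rw [hψdef]; dsimp only; ring
        _ = ((p:ℝ)+2) * v x ^ (p+1) * X₁ x * (g x ^ (p+2) * f x ^ α) := by
            rw [hX₁def]; dsimp only
            rw [hPdef]; dsimp only
            rw [← Finset.prod_pow]
    have e4 : ((p:ℝ)+2) * v x ^ (p+1) * X₁ x * (g x ^ (p+2) * f x ^ α) ≤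
        ((f x ^ ((p:ℝ)+3-α) - f a ^ ((p:ℝ)+3-α)) * Y x) * (g x ^ (p+2) * f x ^ α) :=
      mul_le_mul_of_nonneg_right (hspade x hx)
        (mul_nonneg (pow_nonneg hgnnx _) (hfrpow_nn α x hx))
    have e5 : (f x ^ ((p:ℝ)+3-α)) * f x ^ α = f x ^ (p+2+1) := by
      rw [← Real.rpow_add (hf_pos x hx),
        show ((p:ℝ)+3-α)+α = ((p+2+1:ℕ):ℝ) from by push_cast; ring,
        Real.rpow_natCast]
    have e6 : Kc * (g x ^ (p+2) * Y x) ≤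
        f a ^ ((p:ℝ)+3-α) * f x ^ α * (g x ^ (p+2) * Y x) :=
      mul_le_mul_of_nonneg_right (hKle x hx) (mul_nonneg (pow_nonneg hgnnx _) hYx)
    calc C₀ + ((p:ℝ)+2) * (u x ^ (p+1) * φ x)
        ≤ Kc * (g x ^ (p+2) * Y x) +
            ((f x ^ ((p:ℝ)+3-α) - f a ^ ((p:ℝ)+3-α)) * Y x) * (g x ^ (p+2) * f x ^ α) :=
          add_le_add e1 (e2.trans e4)
      _ ≤ f a ^ ((p:ℝ)+3-α) * f x ^ α * (g x ^ (p+2) * Y x) +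
            ((f x ^ ((p:ℝ)+3-α) - f a ^ ((p:ℝ)+3-α)) * Y x) * (g x ^ (p+2) * f x ^ α) :=
          add_le_add e6 le_rfl
      _ = (f x ^ ((p:ℝ)+3-α) * f x ^ α) * (g x ^ (p+2) * Y x) := by ring
      _ = f x ^ (p+2+1) * g x ^ (p+2) * Y x := by rw [e5]; ring
  -- final assembly
  have hRc : ContinuousOn (fun x => f x ^ (p+2+1) * g x ^ (p+2) * Y x) Ic :=
    ((hfc.pow _).mul (hg_cont.pow _)).mul hYc
  set F : ℝ → ℝ := fun x =>
    (∫ t in a..x, f t ^ (p+2+1) * g t ^ (p+2) * Y t) - (x - a) * C₀ - u x ^ (p+2) with hFdef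
  have hFd : ∀ x ∈ Set.Ioo a b, HasDerivAt F
      (f x ^ (p+2+1) * g x ^ (p+2) * Y x - C₀ - ((p:ℝ)+2) * (u x ^ (p+1) * φ x)) x := by
    intro x hx
    have h1 : HasDerivAt (fun y => ∫ t in a..y, f t ^ (p+2+1) * g t ^ (p+2) * Y t)
        (f x ^ (p+2+1) * g x ^ (p+2) * Y x) x := hprim_deriv _ hRc x hx
    have h2 : HasDerivAt (fun y => (y - a) * C₀) C₀ x := by
      simpa using ((hasDerivAt_id x).sub_const a).mul_const C₀
    have h3 : HasDerivAt (fun y => u y ^ (p+2)) (((p:ℝ)+2) * (u x ^ (p+1) * φ x)) x := by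
      have h4 := (hud x hx).pow (p+2)
      have e : ((p+2:ℕ):ℝ) * u x ^ (p+2-1) * φ x = ((p:ℝ)+2) * (u x ^ (p+1) * φ x) := by
        rw [show p+2-1 = p+1 from by omega]; push_cast; ring
      rwa [e] at h4
    exact (h1.sub h2).sub h3
  have hFmono : MonotoneOn F Ic := by
    apply monotoneOn_of_deriv_nonneg (convex_Icc a b)
    · rw [hFdef]
      refine ContinuousOn.sub (ContinuousOn.sub ?_ ?_) (huc.pow _)
      · have : IntegrableOn (fun t => f t ^ (p+2+1) * g t ^ (p+2) * Y t)
            (Set.uIcc a b) volume := by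
          rw [Set.uIcc_of_le hab']; exact hRc.integrableOn_Icc
        have := intervalIntegral.continuousOn_primitive_interval this
        rwa [Set.uIcc_of_le hab'] at this
      · exact (continuousOn_id.sub continuousOn_const).mul continuousOn_const
    · intro y hy
      rw [interior_Icc] at hy
      exact (hFd y hy).differentiableAt.differentiableWithinAt
    · intro y hy
      rw [interior_Icc] at hy
      rw [(hFd y hy).deriv]
      have := hmain y (Set.Ioo_subset_Icc_self hy)
      linarith
  have hfin := hFmono haIc hbIc hab'
  rw [hFdef] at hfin
  dsimp only at hfin
  rw [intervalIntegral.integral_same, hu0] at hfin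
  have hz0 : (0:ℝ) - (a - a) * C₀ - 0 ^ (p+2) = 0 := by norm_num
  rw [hz0] at hfin
  -- now convert hfin to the goal
  have hub : u b = ∫ x in a..b, φ x := rfl
  rw [← hub]
  simp only [hYdef] at hfin
  have hCeq : (b - a) * Kc * M ^ (p + 2) * ∏ i ∈ FIc, sInf (h i '' Ic) ^ (p + 2 - i) =
      (b - a) * C₀ := by rw [hC₀def]; ring
  rw [hCeq]
  linarith
end

section
/- Let g, h, p be nonnegative functions on [a,b] such that h, p both belong to D₊[a,b] (or both to D₋[a,b]), g is continuous, p is decreasing, and h and g·p are increasing on [a,b]. Let n ∈ ℕ with n ≥ 2, let ν ∈ {2,…,n} and α ≤ n/(n-1), and let f be a strictly positive, (n-1)-times differentiable function on [a,b] with f⁽ⁱ⁾ ≥ 0 for i = 1,…,n-1 and (n+1-α)·f⁽ⁿ⁻¹⁾·f^{n(1-α)} ≥ n!·h·p^{ν} on [a,b]. Set M := inf{g(x) : x ∈ [a,b]} and K := f(a)^{n+1} if α ≥ 0, K := f(a)^{n+1-α}·f(b)^{α} if α < 0. Then (b-a)·K·Mⁿ·h(a)^{n-1}·p(b)^{n-ν}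 + (∫_a^b f^{α}·g·h·p)ⁿ ≤ ∫_a^b f^{n+1}·gⁿ·h^{n-1}·p^{n-ν}. -/
open Set MeasureTheory

private lemma mono_aux {a b : ℝ} {Φ Φ' : ℝ → ℝ}
    (hc : ContinuousOn Φ (Set.Icc a b))
    (hd : ∀ s ∈ Set.Ioo a b, HasDerivAt Φ (Φ' s) s)
    (h0 : ∀ s ∈ Set.Ioo a b, 0 ≤ Φ' s) : MonotoneOn Φ (Set.Icc a b) := by
  apply monotoneOn_of_deriv_nonneg (convex_Icc a b) hc
  · intro x hx
    rw [interior_Icc] at hx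
    exact (hd x hx).differentiableAt.differentiableWithinAt
  · intro x hx
    rw [interior_Icc] at hx
    rw [(hd x hx).deriv]
    exact h0 x hx

private lemma ftc_aux {a b : ℝ} {φ : ℝ → ℝ}
    (hφ : ContinuousOn φ (Set.Icc a b)) {s : ℝ} (hs : s ∈ Set.Ioo a b) :
    HasDerivAt (fun x => ∫ t in a..x, φ t) (φ s) s := by
  have hmem : Set.Icc a b ∈ nhds s := Icc_mem_nhds hs.1 hs.2
  apply intervalIntegral.integral_hasDerivAt_right
  · exact ContinuousOn.intervalIntegrable_of_Icc hs.1.le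
      (hφ.mono (Set.Icc_subset_Icc le_rfl hs.2.le))
  · exact ContinuousOn.stronglyMeasurableAtFilter isOpen_Ioo
      (hφ.mono Set.Ioo_subset_Icc_self) s hs
  · exact (hφ.continuousWithinAt (Set.Ioo_subset_Icc_self hs)).continuousAt hmem

set_option maxHeartbeats 2000000 in
theorem stmt1 (a b : ℝ) (hab : a < b) (n : ℕ) (hn : 2 ≤ n)
    (g h p : ℝ → ℝ)
    (hg_nonneg : ∀ x ∈ Set.Icc a b, 0 ≤ g x)
    (hh_nonneg : ∀ x ∈ Set.Icc a b, 0 ≤ h x)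
    (hp_nonneg : ∀ x ∈ Set.Icc a b, 0 ≤ p x)
    (hD : (DPlus a b h ∧ DPlus a b p) ∨ (DMinus a b h ∧ DMinus a b p))
    (hg_cont : ContinuousOn g (Set.Icc a b))
    (hp_anti : AntitoneOn p (Set.Icc a b))
    (hh_mono : MonotoneOn h (Set.Icc a b))
    (hgp_mono : MonotoneOn (fun x => g x * p x) (Set.Icc a b))
    (ν : ℕ) (hν1 : 2 ≤ ν) (hν2 : ν ≤ n)
    (α : ℝ) (hα : α ≤ (n : ℝ) / ((n : ℝ) - 1))
    (f : ℝ → ℝ) (hf_pos : ∀ x ∈ Set.Icc a b, 0 < f x)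
    (hf_diff : ∀ i < n - 1,
      DifferentiableOn ℝ (iteratedDerivWithin i f (Set.Icc a b)) (Set.Icc a b))
    (hf_nonneg : ∀ i, 1 ≤ i → i ≤ n - 1 → ∀ x ∈ Set.Icc a b,
      0 ≤ iteratedDerivWithin i f (Set.Icc a b) x)
    (hgrowth : ∀ x ∈ Set.Icc a b,
      (n.factorial : ℝ) * h x * p x ^ ν ≤
        ((n : ℝ) + 1 - α) * iteratedDerivWithin (n - 1) f (Set.Icc a b) x *
          f x ^ ((n : ℝ) * (1 - α))) :
    (b - a) *
        (if 0 ≤ α then f a ^ (n + 1) else f a ^ ((n : ℝ) + 1 - α) * f b ^ α) *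
        sInf (g '' Set.Icc a b) ^ n * h a ^ (n - 1) * p b ^ (n - ν) +
      (∫ x in a..b, f x ^ α * g x * h x * p x) ^ n ≤
    ∫ x in a..b, f x ^ (n + 1) * g x ^ n * h x ^ (n - 1) * p x ^ (n - ν) := by
  obtain ⟨k, rfl⟩ : ∃ k, n = k + 2 := ⟨n - 2, by omega⟩
  simp only [show k + 2 - 1 = k + 1 from by omega] at hf_diff hf_nonneg hgrowth ⊢
  have hab' : a ≤ b := hab.le
  have haI : a ∈ Set.Icc a b := ⟨le_rfl, hab'⟩
  have hbI : b ∈ Set.Icc a b := ⟨hab', le_rfl⟩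
  have hUD : UniqueDiffOn ℝ (Set.Icc a b) := uniqueDiffOn_Icc hab
  have hmem_trans : ∀ {y s : ℝ}, y ∈ Set.Icc a b → s ∈ Set.Icc a y → s ∈ Set.Icc a b :=
    fun hy hs => ⟨hs.1, hs.2.trans hy.2⟩
  set N : ℝ := ((k : ℝ) + 2) with hNdef
  have hNcast : ((k + 2 : ℕ) : ℝ) = N := by rw [hNdef]; push_cast; ring
  have hk0 : (0:ℝ) ≤ (k:ℝ) := Nat.cast_nonneg k
  have hα2 : α * ((k:ℝ) + 1) ≤ (k:ℝ) + 2 := by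
    have h1 : (0:ℝ) < ((k + 2 : ℕ) : ℝ) - 1 := by push_cast; linarith
    have h2 := (le_div_iff₀ h1).mp hα
    push_cast at h2
    nlinarith [h2]
  have hαle2 : α ≤ 2 := by nlinarith [hα2, hk0]
  set fd := fun j => iteratedDerivWithin j f (Set.Icc a b) with hfd
  have hfc : ContinuousOn f (Set.Icc a b) := by
    have h0 := (hf_diff 0 (by omega)).continuousOn
    rwa [show iteratedDerivWithin 0 f (Set.Icc a b) = f from iteratedDerivWithin_zero] at h0
  have fdStep : ∀ j, j < k + 1 → ∀ s ∈ Set.Ioo a b, HasDerivAt (fd j) (fd (j+1) s) s := by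
    intro j hj s hs
    have hnh : Set.Icc a b ∈ nhds s := Icc_mem_nhds hs.1 hs.2
    have hdA : DifferentiableAt ℝ (fd j) s :=
      ((hf_diff j hj) s (Set.Ioo_subset_Icc_self hs)).differentiableAt hnh
    have hder := hdA.hasDerivAt
    have e1 : fd (j+1) s = deriv (fd j) s := by
      show iteratedDerivWithin (j+1) f (Set.Icc a b) s
        = deriv (iteratedDerivWithin j f (Set.Icc a b)) s
      rw [iteratedDerivWithin_succ]
      exact derivWithin_of_mem_nhds hnh
    rwa [← e1] at hder
  have hfd0 : fd 0 = f := by rw [hfd]; exact iteratedDerivWithin_zero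
  have hf'At : ∀ s ∈ Set.Ioo a b, HasDerivAt f (fd 1 s) s := by
    intro s hs
    have h1 := fdStep 0 (by omega) s hs
    rwa [hfd0] at h1
  have hf_mono : MonotoneOn f (Set.Icc a b) := by
    apply mono_aux hfc hf'At
    intro s hs
    exact hf_nonneg 1 le_rfl (by omega) s (Set.Ioo_subset_Icc_self hs)
  set φ := fun x => f x ^ α * g x * h x * p x with hφdef
  have hφc : ContinuousOn φ (Set.Icc a b) := by
    apply ContinuousOn.mul _ (by rcases hD with ⟨_, h2⟩ | ⟨_, h2⟩ <;> exact h2.1)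
    apply ContinuousOn.mul _ (by rcases hD with ⟨h1, _⟩ | ⟨h1, _⟩ <;> exact h1.1)
    exact (hfc.rpow_const (fun x hx => Or.inl (hf_pos x hx).ne')).mul hg_cont
  have hφnn : ∀ s ∈ Set.Icc a b, 0 ≤ φ s := by
    intro s hs
    have h1 := hf_pos s hs
    have h2 := hg_nonneg s hs; have h3 := hh_nonneg s hs; have h4 := hp_nonneg s hs
    exact mul_nonneg (mul_nonneg (mul_nonneg (Real.rpow_nonneg h1.le _) h2) h3) h4
  set u := fun x => ∫ t in a..x, φ t with hudef
  have hu0 : u a = 0 := intervalIntegral.integral_same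
  have huc : ContinuousOn u (Set.Icc a b) := by
    have hint : MeasureTheory.IntegrableOn φ (Set.uIcc a b) := by
      rw [Set.uIcc_of_le hab']; exact hφc.integrableOn_Icc
    have hcp := intervalIntegral.continuousOn_primitive_interval hint
    rwa [Set.uIcc_of_le hab'] at hcp
  have hu' : ∀ s ∈ Set.Ioo a b, HasDerivAt u (φ s) s := fun s hs => ftc_aux hφc hs
  have hunn : ∀ s ∈ Set.Icc a b, 0 ≤ u s := by
    intro s hs
    apply intervalIntegral.integral_nonneg hs.1
    intro t ht
    exact hφnn t ⟨ht.1, ht.2.trans hs.2⟩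
  set e : ℕ → ℝ := fun m => (k : ℝ) + 2 + ((m : ℝ) - (k : ℝ) - 1) * α with he_def
  have he_nonneg : ∀ m : ℕ, m ≤ k → 0 ≤ e m := by
    intro m hm
    have hmk : (m : ℝ) ≤ (k : ℝ) := by exact_mod_cast hm
    have hm0 : (0:ℝ) ≤ (m : ℝ) := Nat.cast_nonneg m
    show (0:ℝ) ≤ (k : ℝ) + 2 + ((m : ℝ) - (k : ℝ) - 1) * α
    rcases le_or_gt 0 α with hα0 | hα0
    · nlinarith [hα2, mul_nonneg hm0 hα0]
    · nlinarith [mul_nonneg (neg_nonneg.2 (by linarith : (m:ℝ) - (k:ℝ) - 1 ≤ 0))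
        (neg_nonneg.2 hα0.le)]
  have hNα : (0:ℝ) < N + 1 - α := by rw [hNdef]; linarith [hαle2, hk0]
  set cN : ℝ := (N + 1 - α) / ((k+2).factorial : ℝ) with hcN
  have hcN0 : 0 ≤ cN := div_nonneg hNα.le (Nat.cast_nonneg _)
  have growth' : ∀ s ∈ Set.Icc a b,
      φ s * p s ^ ν ≤ cN * (g s * p s) * (f s ^ e 0 * fd (k+1) s) := by
    intro s hsI
    have hg := hgrowth s hsI
    rw [hNcast] at hg
    have hfacpos : (0:ℝ) < ((k+2).factorial : ℝ) := by exact_mod_cast (k+2).factorial_pos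
    have key : h s * p s ^ ν ≤ cN * (fd (k+1) s * f s ^ (N * (1 - α))) := by
      rw [hcN, div_mul_eq_mul_div, le_div_iff₀ hfacpos]
      nlinarith [hg]
    have hsplit : f s ^ e 0 = f s ^ α * f s ^ (N * (1 - α)) := by
      rw [← Real.rpow_add (hf_pos s hsI)]
      congr 1
      simp only [he_def, hNdef]
      push_cast
      ring
    calc φ s * p s ^ ν = (g s * p s) * (f s ^ α * (h s * p s ^ ν)) := by rw [hφdef]; ring
      _ ≤ (g s * p s) * (f s ^ α * (cN * (fd (k+1) s * f s ^ (N * (1 - α))))) := by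
          apply mul_le_mul_of_nonneg_left
            (mul_le_mul_of_nonneg_left key (Real.rpow_nonneg (hf_pos s hsI).le _))
            (mul_nonneg (hg_nonneg s hsI) (hp_nonneg s hsI))
      _ = cN * (g s * p s) * (f s ^ e 0 * fd (k+1) s) := by rw [hsplit]; ring
  -- the main chain of pointwise estimates
  have P : ∀ m : ℕ, m ≤ k → ∀ y ∈ Set.Icc a b, ∀ s ∈ Set.Icc a y,
      u s ^ m * (φ s * p y ^ ν) ≤
        (m.factorial : ℝ) * cN * ((g y * p y) ^ (m+1) * h y ^ m) *
          (f s ^ e m * fd (k + 1 - m) s) := by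
    intro m
    induction m with
    | zero =>
      intro _ y hy s hs
      have hsI : s ∈ Set.Icc a b := hmem_trans hy hs
      have hpys : p y ^ ν ≤ p s ^ ν :=
        pow_le_pow_left₀ (hp_nonneg y hy) (hp_anti hsI hy hs.2) ν
      have h1 : φ s * p y ^ ν ≤ φ s * p s ^ ν :=
        mul_le_mul_of_nonneg_left hpys (hφnn s hsI)
      have h2 := growth' s hsI
      have h3 : cN * (g s * p s) * (f s ^ e 0 * fd (k+1) s) ≤
          cN * (g y * p y) * (f s ^ e 0 * fd (k+1) s) := by
        have hgp : g s * p s ≤ g y * p y := hgp_mono hsI hy hs.2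
        have hnn : 0 ≤ f s ^ e 0 * fd (k+1) s :=
          mul_nonneg (Real.rpow_nonneg (hf_pos s hsI).le _)
            (hf_nonneg (k+1) (by omega) (by omega) s hsI)
        exact mul_le_mul_of_nonneg_right (mul_le_mul_of_nonneg_left hgp hcN0) hnn
      calc u s ^ 0 * (φ s * p y ^ ν) = φ s * p y ^ ν := by ring
        _ ≤ φ s * p s ^ ν := h1
        _ ≤ cN * (g s * p s) * (f s ^ e 0 * fd (k+1) s) := h2
        _ ≤ cN * (g y * p y) * (f s ^ e 0 * fd (k+1) s) := h3
        _ = ((Nat.factorial 0 : ℕ) : ℝ) * cN * ((g y * p y) ^ (0+1) * h y ^ 0) *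
              (f s ^ e 0 * fd (k + 1 - 0) s) := by
            norm_num [Nat.factorial]
    | succ m ih =>
      intro hmn y hy s hs
      have hmk : m ≤ k := by omega
      have ihm := ih hmk
      have inner : ∀ z ∈ Set.Icc a b, u z ^ (m+1) * p z ^ ν ≤
          ((m+1).factorial : ℝ) * cN * ((g z * p z) ^ (m+1) * h z ^ m) *
            (f z ^ e m * fd (k - m) z) := by
        intro z hz
        have hwnn : 0 ≤ (m.factorial : ℝ) * cN * ((g z * p z) ^ (m+1) * h z ^ m) :=
          mul_nonneg (mul_nonneg (Nat.cast_nonneg _) hcN0)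
            (mul_nonneg (pow_nonneg (mul_nonneg (hg_nonneg z hz) (hp_nonneg z hz)) _)
              (pow_nonneg (hh_nonneg z hz) _))
        set C : ℝ := ((m:ℝ)+1) * ((m.factorial : ℝ) * cN * ((g z * p z) ^ (m+1) * h z ^ m) *
          f z ^ e m) with hC
        have hC0 : 0 ≤ C := by
          apply mul_nonneg (by positivity)
          exact mul_nonneg hwnn (Real.rpow_nonneg (hf_pos z hz).le _)
        have hsub : Set.Icc a z ⊆ Set.Icc a b := fun t ht => hmem_trans hz ht
        have hfd_cont : ContinuousOn (fd (k - m)) (Set.Icc a b) :=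
          (hf_diff _ (by omega)).continuousOn
        set Φ : ℝ → ℝ := fun t => C * (fd (k - m) t - fd (k - m) a) - u t ^ (m+1) * p z ^ ν
          with hΦ
        have hcont : ContinuousOn Φ (Set.Icc a z) := by
          apply ContinuousOn.sub
          · exact continuousOn_const.mul ((hfd_cont.mono hsub).sub continuousOn_const)
          · exact ((huc.mono hsub).pow _).mul continuousOn_const
        have hmono : MonotoneOn Φ (Set.Icc a z) := by
          apply mono_aux hcont
            (Φ' := fun t => C * fd (k + 1 - m) t - (((m:ℝ)+1) * u t ^ m * φ t) * p z ^ ν)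
          · intro t ht
            have htb : t ∈ Set.Ioo a b := ⟨ht.1, lt_of_lt_of_le ht.2 hz.2⟩
            have h1 := fdStep (k - m) (by omega) t htb
            rw [show k - m + 1 = k + 1 - m from by omega] at h1
            have h2 := (hu' t htb).fun_pow (m+1)
            simp only [Nat.add_sub_cancel] at h2
            have h3 := ((h1.sub_const (fd (k - m) a)).const_mul C).sub
              (h2.mul_const (p z ^ ν))
            refine h3.congr_deriv ?_
            push_cast
            ring
          · intro t ht
            have htb : t ∈ Set.Ioo a b := ⟨ht.1, lt_of_lt_of_le ht.2 hz.2⟩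
            have htI : t ∈ Set.Icc a b := Set.Ioo_subset_Icc_self htb
            have hP := ihm z hz t ⟨ht.1.le, ht.2.le⟩
            have hpull : f t ^ e m ≤ f z ^ e m :=
              Real.rpow_le_rpow (hf_pos t htI).le (hf_mono htI hz ht.2.le) (he_nonneg m hmk)
            have hfdnn : 0 ≤ fd (k + 1 - m) t := hf_nonneg _ (by omega) (by omega) t htI
            have hstep : (((m:ℝ)+1) * u t ^ m * φ t) * p z ^ ν ≤ C * fd (k + 1 - m) t := by
              calc (((m:ℝ)+1) * u t ^ m * φ t) * p z ^ ν
                  = ((m:ℝ)+1) * (u t ^ m * (φ t * p z ^ ν)) := by ring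
                _ ≤ ((m:ℝ)+1) * ((m.factorial : ℝ) * cN * ((g z * p z) ^ (m+1) * h z ^ m) *
                      (f t ^ e m * fd (k + 1 - m) t)) := by
                    apply mul_le_mul_of_nonneg_left hP (by positivity)
                _ ≤ ((m:ℝ)+1) * ((m.factorial : ℝ) * cN * ((g z * p z) ^ (m+1) * h z ^ m) *
                      (f z ^ e m * fd (k + 1 - m) t)) := by
                    apply mul_le_mul_of_nonneg_left _ (by positivity)
                    exact mul_le_mul_of_nonneg_left
                      (mul_le_mul_of_nonneg_right hpull hfdnn) hwnn
                _ = C * fd (k + 1 - m) t := by rw [hC]; ring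
            linarith
        have hΦaz : Φ a ≤ Φ z := hmono ⟨le_rfl, hz.1⟩ ⟨hz.1, le_rfl⟩ hz.1
        have hΦa : Φ a = 0 := by
          rw [hΦ]
          simp [hu0]
        have hfda : 0 ≤ fd (k - m) a := by
          rcases Nat.eq_zero_or_pos (k - m) with h0 | h0
          · rw [h0, hfd0]
            exact (hf_pos a haI).le
          · exact hf_nonneg _ h0 (by omega) a haI
        have hmain : u z ^ (m+1) * p z ^ ν ≤ C * fd (k - m) z := by
          rw [hΦa, hΦ] at hΦaz
          simp only at hΦaz
          nlinarith [mul_nonneg hC0 hfda]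
        calc u z ^ (m+1) * p z ^ ν ≤ C * fd (k - m) z := hmain
          _ = ((m+1).factorial : ℝ) * cN * ((g z * p z) ^ (m+1) * h z ^ m) *
              (f z ^ e m * fd (k - m) z) := by
            rw [hC, Nat.factorial_succ]
            push_cast
            ring
      -- now conclude the induction step
      have hsI : s ∈ Set.Icc a b := hmem_trans hy hs
      have hpys : p y ^ ν ≤ p s ^ ν :=
        pow_le_pow_left₀ (hp_nonneg y hy) (hp_anti hsI hy hs.2) ν
      have hfdnn : 0 ≤ fd (k - m) s := by
        rcases Nat.eq_zero_or_pos (k - m) with h0 | h0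
        · rw [h0, hfd0]; exact (hf_pos s hsI).le
        · exact hf_nonneg _ h0 (by omega) s hsI
      have hexp : f s ^ e m * f s ^ α = f s ^ e (m+1) := by
        rw [← Real.rpow_add (hf_pos s hsI)]
        congr 1
        simp only [he_def]
        push_cast
        ring
      have hgpnn_s : 0 ≤ g s * p s := mul_nonneg (hg_nonneg s hsI) (hp_nonneg s hsI)
      have hhnn_s : 0 ≤ h s := hh_nonneg s hsI
      have hwpull : (g s * p s) ^ (m+2) * h s ^ (m+1) ≤ (g y * p y) ^ (m+2) * h y ^ (m+1) := by
        apply mul_le_mul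
        · exact pow_le_pow_left₀ hgpnn_s (hgp_mono hsI hy hs.2) _
        · exact pow_le_pow_left₀ hhnn_s (hh_mono hsI hy hs.2) _
        · exact pow_nonneg hhnn_s _
        · exact pow_nonneg (mul_nonneg (hg_nonneg y hy) (hp_nonneg y hy)) _
      calc u s ^ (m+1) * (φ s * p y ^ ν)
          = (u s ^ (m+1) * p y ^ ν) * φ s := by ring
        _ ≤ (u s ^ (m+1) * p s ^ ν) * φ s := by
            apply mul_le_mul_of_nonneg_right _ (hφnn s hsI)
            exact mul_le_mul_of_nonneg_left hpys (pow_nonneg (hunn s hsI) _)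
        _ ≤ (((m+1).factorial : ℝ) * cN * ((g s * p s) ^ (m+1) * h s ^ m) *
              (f s ^ e m * fd (k - m) s)) * φ s :=
            mul_le_mul_of_nonneg_right (inner s hsI) (hφnn s hsI)
        _ = ((m+1).factorial : ℝ) * cN * ((g s * p s) ^ (m+2) * h s ^ (m+1)) *
              ((f s ^ e m * f s ^ α) * fd (k - m) s) := by
            rw [hφdef]
            ring
        _ = ((m+1).factorial : ℝ) * cN * ((g s * p s) ^ (m+2) * h s ^ (m+1)) *
              (f s ^ e (m+1) * fd (k - m) s) := by rw [hexp]
        _ ≤ ((m+1).factorial : ℝ) * cN * ((g y * p y) ^ (m+2) * h y ^ (m+1)) *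
              (f s ^ e (m+1) * fd (k - m) s) := by
            apply mul_le_mul_of_nonneg_right _
              (mul_nonneg (Real.rpow_nonneg (hf_pos s hsI).le _) hfdnn)
            exact mul_le_mul_of_nonneg_left hwpull
              (mul_nonneg (Nat.cast_nonneg _) hcN0)
        _ = ((m+1).factorial : ℝ) * cN * ((g y * p y) ^ (m+1+1) * h y ^ (m+1)) *
              (f s ^ e (m+1) * fd (k + 1 - (m+1)) s) := by
            rw [show k + 1 - (m+1) = k - m from by omega]
  -- the last step of the chain, with the exact antiderivative
  have final : ∀ y ∈ Set.Icc a b,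
      ((k:ℝ) + 2) * (u y ^ (k+1) * p y ^ ν) ≤
        (g y * p y) ^ (k+1) * h y ^ k * (f y ^ (N + 1 - α) - f a ^ (N + 1 - α)) := by
    intro y hy
    have hAnn : 0 ≤ (g y * p y) ^ (k+1) * h y ^ k :=
      mul_nonneg (pow_nonneg (mul_nonneg (hg_nonneg y hy) (hp_nonneg y hy)) _)
        (pow_nonneg (hh_nonneg y hy) _)
    set A : ℝ := (g y * p y) ^ (k+1) * h y ^ k with hA
    have hsub : Set.Icc a y ⊆ Set.Icc a b := fun t ht => hmem_trans hy ht
    set Φ : ℝ → ℝ := fun t =>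
      A * (f t ^ (N + 1 - α) - f a ^ (N + 1 - α)) - ((k:ℝ) + 2) * (u t ^ (k+1) * p y ^ ν)
      with hΦ
    have hcont : ContinuousOn Φ (Set.Icc a y) := by
      apply ContinuousOn.sub
      · apply continuousOn_const.mul
        apply ContinuousOn.sub _ continuousOn_const
        exact (hfc.mono hsub).rpow_const (fun x hx => Or.inl (hf_pos x (hsub hx)).ne')
      · exact continuousOn_const.mul (((huc.mono hsub).pow _).mul continuousOn_const)
    have hmono : MonotoneOn Φ (Set.Icc a y) := by
      apply mono_aux hcont
        (Φ' := fun t => A * (fd 1 t * (N + 1 - α) * f t ^ (N - α)) -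
          ((k:ℝ) + 2) * ((((k:ℝ)+1) * u t ^ k * φ t) * p y ^ ν))
      · intro t ht
        have htb : t ∈ Set.Ioo a b := ⟨ht.1, lt_of_lt_of_le ht.2 hy.2⟩
        have htI : t ∈ Set.Icc a b := Set.Ioo_subset_Icc_self htb
        have h1 := (hf'At t htb).rpow_const (p := N + 1 - α) (Or.inl (hf_pos t htI).ne')
        rw [show N + 1 - α - 1 = N - α from by ring] at h1
        have h2 := (hu' t htb).fun_pow (k+1)
        simp only [Nat.add_sub_cancel] at h2
        have h3 := ((h1.sub_const (f a ^ (N + 1 - α))).const_mul A).sub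
          (((h2.mul_const (p y ^ ν)).const_mul ((k:ℝ) + 2)))
        refine h3.congr_deriv ?_
        push_cast
        ring
      · intro t ht
        have htb : t ∈ Set.Ioo a b := ⟨ht.1, lt_of_lt_of_le ht.2 hy.2⟩
        have htI : t ∈ Set.Icc a b := Set.Ioo_subset_Icc_self htb
        have hP := P k le_rfl y hy t ⟨ht.1.le, ht.2.le⟩
        rw [show k + 1 - k = 1 from by omega] at hP
        have hek : e k = N - α := by
          simp only [he_def, hNdef]
          push_cast
          ring
        rw [hek] at hP
        have hcoef : ((k:ℝ)+2) * ((k:ℝ)+1) * (k.factorial : ℝ) * cN = N + 1 - α := by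
          rw [hcN]
          have hfct : ((k+2).factorial : ℝ) = ((k:ℝ)+2) * (((k:ℝ)+1) * (k.factorial : ℝ)) := by
            rw [Nat.factorial_succ, Nat.factorial_succ]
            push_cast
            ring
          rw [hfct]
          have hne : ((k:ℝ)+2) * (((k:ℝ)+1) * (k.factorial : ℝ)) ≠ 0 := by positivity
          field_simp
        have hscaled : ((k:ℝ)+2) * ((((k:ℝ)+1) * u t ^ k * φ t) * p y ^ ν) ≤
            A * (fd 1 t * (N + 1 - α) * f t ^ (N - α)) := by
          calc ((k:ℝ)+2) * ((((k:ℝ)+1) * u t ^ k * φ t) * p y ^ ν)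
              = (((k:ℝ)+2) * ((k:ℝ)+1)) * (u t ^ k * (φ t * p y ^ ν)) := by ring
            _ ≤ (((k:ℝ)+2) * ((k:ℝ)+1)) *
                  ((k.factorial : ℝ) * cN * ((g y * p y) ^ (k+1) * h y ^ k) *
                    (f t ^ (N - α) * fd 1 t)) := by
                apply mul_le_mul_of_nonneg_left hP (by positivity)
            _ = (((k:ℝ)+2) * ((k:ℝ)+1) * (k.factorial : ℝ) * cN) *
                  ((g y * p y) ^ (k+1) * h y ^ k) * (f t ^ (N - α) * fd 1 t) := by ring
            _ = A * (fd 1 t * (N + 1 - α) * f t ^ (N - α)) := by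
                rw [hcoef, hA]
                ring
        linarith
    have hΦay : Φ a ≤ Φ y := hmono ⟨le_rfl, hy.1⟩ ⟨hy.1, le_rfl⟩ hy.1
    have hΦa : Φ a = 0 := by
      rw [hΦ]
      simp [hu0]
    rw [hΦa, hΦ] at hΦay
    simp only at hΦay
    linarith
  -- facts about the constant K
  set M : ℝ := sInf (g '' Set.Icc a b) with hM
  have hMbdd : BddBelow (g '' Set.Icc a b) := by
    refine ⟨0, ?_⟩
    rintro _ ⟨x, hx, rfl⟩
    exact hg_nonneg x hx
  have hM0 : 0 ≤ M := by
    apply Real.sInf_nonneg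
    rintro _ ⟨x, hx, rfl⟩
    exact hg_nonneg x hx
  have hMle : ∀ x ∈ Set.Icc a b, M ≤ g x := fun x hx => csInf_le hMbdd ⟨x, hx, rfl⟩
  set Kc : ℝ := if 0 ≤ α then f a ^ (k + 2 + 1)
    else f a ^ (((k + 2 : ℕ) : ℝ) + 1 - α) * f b ^ α with hKc
  have hfa_pos : 0 < f a := hf_pos a haI
  have hnatp : ∀ y ∈ Set.Icc a b, f y ^ (N + 1 - α) * f y ^ α = f y ^ (k + 2 + 1) := by
    intro y hy
    rw [← Real.rpow_add (hf_pos y hy)]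
    rw [show N + 1 - α + α = ((k + 2 + 1 : ℕ) : ℝ) from by rw [hNdef]; push_cast; ring]
    exact Real.rpow_natCast _ _
  have hKle : ∀ y ∈ Set.Icc a b, Kc ≤ f a ^ (N + 1 - α) * f y ^ α := by
    intro y hy
    rw [hKc]
    split_ifs with hα0
    · have h1 : f a ^ (k + 2 + 1) = f a ^ (N + 1 - α) * f a ^ α := (hnatp a haI).symm
      rw [h1]
      apply mul_le_mul_of_nonneg_left _ (Real.rpow_nonneg hfa_pos.le _)
      exact Real.rpow_le_rpow hfa_pos.le (hf_mono haI hy hy.1) hα0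
    · have h2 : f b ^ α ≤ f y ^ α :=
        Real.rpow_le_rpow_of_nonpos (hf_pos y hy) (hf_mono hy hbI hy.2) (le_of_not_ge hα0)
      have h3 : f a ^ (((k + 2 : ℕ) : ℝ) + 1 - α) = f a ^ (N + 1 - α) := by rw [hNcast]
      rw [h3]
      exact mul_le_mul_of_nonneg_left h2 (Real.rpow_nonneg hfa_pos.le _)
  have hK0 : 0 ≤ Kc := by
    rw [hKc]
    split_ifs
    · positivity
    · exact mul_nonneg (Real.rpow_nonneg hfa_pos.le _) (Real.rpow_nonneg (hf_pos b hbI).le _)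
  have hKpow : ∀ y ∈ Set.Icc a b, Kc ≤ f y ^ (k + 2 + 1) := by
    intro y hy
    calc Kc ≤ f a ^ (N + 1 - α) * f y ^ α := hKle y hy
      _ ≤ f y ^ (N + 1 - α) * f y ^ α := by
          apply mul_le_mul_of_nonneg_right _ (Real.rpow_nonneg (hf_pos y hy).le _)
          exact Real.rpow_le_rpow hfa_pos.le (hf_mono haI hy hy.1) hNα.le
      _ = f y ^ (k + 2 + 1) := hnatp y hy
  -- the pointwise star inequality
  have star : ∀ y ∈ Set.Icc a b,
      ((k:ℝ) + 2) * u y ^ (k+1) * φ y ≤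
        (f y ^ (k + 2 + 1) - Kc) * (g y ^ (k+2) * h y ^ (k+1) * p y ^ (k + 2 - ν)) := by
    intro y hy
    have hQnn : 0 ≤ g y ^ (k+2) * h y ^ (k+1) * p y ^ (k + 2 - ν) := by
      have := hg_nonneg y hy; have := hh_nonneg y hy; have := hp_nonneg y hy
      positivity
    rcases eq_or_lt_of_le (hp_nonneg y hy) with hpy | hpy
    · have hφy : φ y = 0 := by
        rw [hφdef]
        simp [← hpy]
      rw [hφy, mul_zero]
      apply mul_nonneg _ hQnn
      have := hKpow y hy
      linarith
    · have hfin := final y hy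
      have hWnn : 0 ≤ f y ^ α * (g y * h y) :=
        mul_nonneg (Real.rpow_nonneg (hf_pos y hy).le _)
          (mul_nonneg (hg_nonneg y hy) (hh_nonneg y hy))
      have hmul := mul_le_mul_of_nonneg_right hfin hWnn
      -- identities
      set X := f y ^ (N + 1 - α) with hX
      set Aa := f a ^ (N + 1 - α) with hAa
      set W := f y ^ α with hW
      have hXW : X * W = f y ^ (k + 2 + 1) := hnatp y hy
      have hpν : p y ^ ν = p y ^ (ν - 1) * p y := by
        rw [← pow_succ]
        congr 1
        omega
      have hpn1 : p y ^ (k+1) = p y ^ (k + 2 - ν) * p y ^ (ν - 1) := by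
        rw [← pow_add]
        congr 1
        omega
      have hLHS : ((k:ℝ) + 2) * (u y ^ (k+1) * p y ^ ν) * (W * (g y * h y)) =
          (((k:ℝ) + 2) * u y ^ (k+1) * φ y) * p y ^ (ν - 1) := by
        rw [hpν, hφdef, hW]
        ring
      have hRHS : (g y * p y) ^ (k+1) * h y ^ k * (X - Aa) *
          (W * (g y * h y)) =
          ((f y ^ (k + 2 + 1) - Aa * W) *
            (g y ^ (k+2) * h y ^ (k+1) * p y ^ (k + 2 - ν))) * p y ^ (ν - 1) := by
        rw [← hXW, mul_pow, hpn1]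
        ring
      rw [hLHS, hRHS] at hmul
      have hKstep : (f y ^ (k + 2 + 1) - Aa * W) *
            (g y ^ (k+2) * h y ^ (k+1) * p y ^ (k + 2 - ν)) ≤
          (f y ^ (k + 2 + 1) - Kc) * (g y ^ (k+2) * h y ^ (k+1) * p y ^ (k + 2 - ν)) := by
        apply mul_le_mul_of_nonneg_right _ hQnn
        have := hKle y hy
        linarith
      have hppos : 0 < p y ^ (ν - 1) := pow_pos hpy _
      have hfinal2 : (((k:ℝ) + 2) * u y ^ (k+1) * φ y) * p y ^ (ν - 1) ≤
          ((f y ^ (k + 2 + 1) - Kc) * (g y ^ (k+2) * h y ^ (k+1) * p y ^ (k + 2 - ν))) *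
            p y ^ (ν - 1) := by
        calc (((k:ℝ) + 2) * u y ^ (k+1) * φ y) * p y ^ (ν - 1)
            ≤ ((f y ^ (k + 2 + 1) - f a ^ (N + 1 - α) * f y ^ α) *
                (g y ^ (k+2) * h y ^ (k+1) * p y ^ (k + 2 - ν))) * p y ^ (ν - 1) := hmul
          _ ≤ _ := mul_le_mul_of_nonneg_right hKstep hppos.le
      exact le_of_mul_le_mul_right hfinal2 hppos
  -- now integrate
  set Q0 : ℝ := M ^ (k+2) * h a ^ (k+1) * p b ^ (k + 2 - ν) with hQ0
  have hQ0nn : 0 ≤ Q0 := by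
    have := hh_nonneg a haI; have := hp_nonneg b hbI
    positivity
  have hQ0le : ∀ t ∈ Set.Icc a b, Q0 ≤ g t ^ (k+2) * h t ^ (k+1) * p t ^ (k + 2 - ν) := by
    intro t ht
    rw [hQ0]
    apply mul_le_mul
    · apply mul_le_mul
      · exact pow_le_pow_left₀ hM0 (hMle t ht) _
      · exact pow_le_pow_left₀ (hh_nonneg a haI) (hh_mono haI ht ht.1) _
      · exact pow_nonneg (hh_nonneg a haI) _
      · exact pow_nonneg (hg_nonneg t ht) _
    · exact pow_le_pow_left₀ (hp_nonneg b hbI) (hp_anti ht hbI ht.2) _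
    · exact pow_nonneg (hp_nonneg b hbI) _
    · exact mul_nonneg (pow_nonneg (hg_nonneg t ht) _) (pow_nonneg (hh_nonneg t ht) _)
  set Ψ := fun x => f x ^ (k + 2 + 1) * g x ^ (k + 2) * h x ^ (k + 1) * p x ^ (k + 2 - ν)
    with hΨdef
  have hΨc : ContinuousOn Ψ (Set.Icc a b) := by
    have hhc : ContinuousOn h (Set.Icc a b) := by
      rcases hD with ⟨h1, _⟩ | ⟨h1, _⟩ <;> exact h1.1
    have hpc : ContinuousOn p (Set.Icc a b) := by
      rcases hD with ⟨_, h2⟩ | ⟨_, h2⟩ <;> exact h2.1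
    exact (((hfc.pow _).mul (hg_cont.pow _)).mul (hhc.pow _)).mul (hpc.pow _)
  set F : ℝ → ℝ := fun t => (∫ s in a..t, Ψ s) - u t ^ (k+2) - (t - a) * (Kc * Q0) with hF
  have hFc : ContinuousOn F (Set.Icc a b) := by
    apply ContinuousOn.sub
    apply ContinuousOn.sub
    · have hint : MeasureTheory.IntegrableOn Ψ (Set.uIcc a b) := by
        rw [Set.uIcc_of_le hab']; exact hΨc.integrableOn_Icc
      have hcp := intervalIntegral.continuousOn_primitive_interval hint
      rwa [Set.uIcc_of_le hab'] at hcp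
    · exact huc.pow _
    · exact (continuousOn_id.sub continuousOn_const).mul continuousOn_const
  have hFmono : MonotoneOn F (Set.Icc a b) := by
    apply mono_aux hFc
      (Φ' := fun t => Ψ t - ((k:ℝ)+2) * u t ^ (k+1) * φ t - Kc * Q0)
    · intro t ht
      have h1 := ftc_aux hΨc ht
      have h2 := (hu' t ht).fun_pow (k+2)
      simp only [show k + 2 - 1 = k + 1 from by omega] at h2
      have h3 := ((hasDerivAt_id t).sub_const a).mul_const (Kc * Q0)
      have h4 := (h1.sub h2).sub h3
      refine h4.congr_deriv ?_
      push_cast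
      ring
    · intro t ht
      have htI : t ∈ Set.Icc a b := Set.Ioo_subset_Icc_self ht
      have hstar := star t htI
      have hQle := hQ0le t htI
      have hKQ : Kc * Q0 ≤ Kc * (g t ^ (k+2) * h t ^ (k+1) * p t ^ (k + 2 - ν)) :=
        mul_le_mul_of_nonneg_left hQle hK0
      have hΨt : Ψ t = f t ^ (k + 2 + 1) * (g t ^ (k+2) * h t ^ (k+1) * p t ^ (k + 2 - ν)) := by
        rw [hΨdef]; ring
      rw [hΨt]
      nlinarith [hstar, hKQ]
  have hFab : F a ≤ F b := hFmono haI hbI hab'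
  have hFa : F a = 0 := by
    rw [hF]
    simp [hu0]
  rw [hFa, hF] at hFab
  simp only at hFab
  rw [hQ0] at hFab
  show (b - a) * Kc * M ^ (k + 2) * h a ^ (k + 1) * p b ^ (k + 2 - ν) + u b ^ (k + 2) ≤
    ∫ s in a..b, Ψ s
  nlinarith [hFab]
end

section
/- Let n ≥ 2 and let f be a strictly positive, n-times differentiable function on [a,b] satisfying f⁽ⁱ⁾ ≥ 0 for i = 1,…,n-2, f⁽ⁿ⁻¹⁾(x) > 0 for all x ∈ [a,b], and f⁽ⁿ⁾ ≤ 0. Let h belong to D₊[a,b] or D₋[a,b] be increasing with 0 ≤ h ≤ 1, and let α ≤ n/(n-1). Set K := f(a)^{n+1} if α ≥ 0, K := f(a)^{n+1-α}·f(b)^{α} if α < 0, and C := f(a) if α ≤ 1, C := f(b) if α > 1. Then (b-a)·K·h(a)^{n-1}/f⁽ⁿ⁻¹⁾(a) + (n+1-α)·(C^{n(1-α)}/n!)·(∫_a^b f^{α}·h)ⁿ ≤ ∫_a^b f^{n+1}·h^{n-1}/f⁽ⁿ⁻¹⁾. -/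
open Set MeasureTheory intervalIntegral
open Real


-- r-version of the α<0 scalar inequality
lemma scalar_neg_r {n : ℕ} (hn : 2 ≤ n) {α r : ℝ} (hα : α < 0) (hr : 1 ≤ r) :
    ((n:ℝ)+1-α) * r^(2*α) ≤ ((n:ℝ)+1) * r^((n:ℝ)) + (-α) * r^(α-1) := by
  have hr0 : (0:ℝ) < r := lt_of_lt_of_le one_pos hr
  have hn2 : (2:ℝ) ≤ (n:ℝ) := by exact_mod_cast hn
  rcases le_or_gt α (-1) with h1 | h1
  · have e1 : r^(2*α) ≤ r^(α-1) := rpow_le_rpow_of_exponent_le hr (by linarith)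
    have e2 : r^(2*α) ≤ r^((n:ℝ)) := rpow_le_rpow_of_exponent_le hr (by linarith)
    nlinarith [rpow_nonneg hr0.le (2*α)]
  · -- -1 < α < 0
    have key : ((n:ℝ)+1+(-α))*r ≤ ((n:ℝ)+1)*(r*r) + (-α) := by
      have h2 : (0:ℝ) ≤ (r - 1) * (((n:ℝ)+1)*r + α) := by
        apply mul_nonneg (by linarith)
        nlinarith
      nlinarith [h2]
    have hp : (0:ℝ) ≤ r^(2*α-1) := (rpow_pos_of_pos hr0 _).le
    have e1 : r^(2*α) = r^(2*α-1) * r := by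
      rw [← Real.rpow_add_one hr0.ne' (2*α-1)]; ring_nf
    have e2 : r^(2*α+1) = r^(2*α-1) * (r*r) := by
      have : r^(2*α+1) = r^(2*α-1) * r^(2:ℝ) := by
        rw [← Real.rpow_add hr0]; ring_nf
      rw [this, show (2:ℝ) = ((2:ℕ):ℝ) by norm_num, Real.rpow_natCast]; ring
    have step : ((n:ℝ)+1-α) * r^(2*α) ≤ ((n:ℝ)+1) * r^(2*α+1) + (-α) * r^(2*α-1) := by
      rw [e1, e2]
      nlinarith [mul_le_mul_of_nonneg_left key hp]
    have e3 : r^(2*α+1) ≤ r^((n:ℝ)) := rpow_le_rpow_of_exponent_le hr (by linarith)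
    have e4 : r^(2*α-1) ≤ r^(α-1) := rpow_le_rpow_of_exponent_le hr (by linarith)
    nlinarith [e3, e4]

-- A-F version
lemma scalar_neg {n : ℕ} (hn : 2 ≤ n) {α A F : ℝ} (hα : α < 0) (hA : 0 < A) (hAF : A ≤ F) :
    ((n:ℝ)+1-α) * (A^((n:ℝ)-2*α) * F^(2*α))
      ≤ ((n:ℝ)+1) * F^(n:ℕ) + (-α) * (A^((n:ℝ)+1-α) * F^(α-1)) := by
  have hF : 0 < F := lt_of_lt_of_le hA hAF
  set r := F / A with hrdef
  have hr : 1 ≤ r := (one_le_div hA).2 hAF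
  have hFr : F = A * r := by rw [hrdef]; field_simp
  have hr0 : 0 < r := lt_of_lt_of_le one_pos hr
  have key := scalar_neg_r hn hα hr
  have hmul := mul_le_mul_of_nonneg_left key (rpow_pos_of_pos hA ((n:ℝ))).le
  -- A^n * each term
  have t1 : A^((n:ℝ)) * (((n:ℝ)+1-α) * r^(2*α)) = ((n:ℝ)+1-α) * (A^((n:ℝ)-2*α) * F^(2*α)) := by
    rw [hFr, Real.mul_rpow hA.le hr0.le]
    have e : A^((n:ℝ)) = A^((n:ℝ)-2*α) * A^(2*α) := by
      rw [← Real.rpow_add hA]; ring_nf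
    rw [e]; ring
  have t2 : A^((n:ℝ)) * (((n:ℝ)+1) * r^((n:ℝ))) = ((n:ℝ)+1) * F^(n:ℕ) := by
    rw [hFr, ← Real.rpow_natCast (A*r) n, Real.mul_rpow hA.le hr0.le]
    ring
  have t3 : A^((n:ℝ)) * ((-α) * r^(α-1)) = (-α) * (A^((n:ℝ)+1-α) * F^(α-1)) := by
    rw [hFr, Real.mul_rpow hA.le hr0.le]
    have e : A^((n:ℝ)) = A^((n:ℝ)+1-α) * A^(α-1) := by
      rw [← Real.rpow_add hA]; ring_nf
    rw [e]; ring
  rw [t1] at hmul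
  rw [mul_add, t2, t3] at hmul
  exact hmul

lemma Bprime {n : ℕ} (hn : 2 ≤ n) {α A B F W X : ℝ} (hA : 0 < A) (hAF : A ≤ F) (hFB : F ≤ B)
    (hW : 0 ≤ W) (hX : 0 ≤ X)
    (hW1 : 0 ≤ α → W ≤ X * F^α) (hW2 : α < 0 → W ≤ X * A^α) :
    (if α ≤ 1 then A else B)^((n:ℝ)*(1-α)) * W^(n-2) ≤ F^((n:ℝ)-2*α) * X^(n-2) := by
  have hF : 0 < F := lt_of_lt_of_le hA hAF
  have hcast : ((n-2:ℕ):ℝ) = (n:ℝ) - 2 := by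
    push_cast [Nat.cast_sub hn]; ring
  have pow_eq : ∀ T : ℝ, 0 < T → (T^α)^(n-2) = T^(α*((n:ℝ)-2)) := by
    intro T hT
    rw [← Real.rpow_natCast (T^α) (n-2), ← Real.rpow_mul hT.le, hcast]
  rcases lt_or_ge α 0 with hneg | hpos
  · -- α < 0, CC = A
    rw [if_pos (by linarith : α ≤ 1)]
    have w1 : W^(n-2) ≤ (X * A^α)^(n-2) := pow_le_pow_left₀ hW (hW2 hneg) _
    have e1 : (X * A^α)^(n-2) = X^(n-2) * A^(α*((n:ℝ)-2)) := by
      rw [mul_pow, pow_eq A hA]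
    have h2 : A^((n:ℝ)*(1-α)) * A^(α*((n:ℝ)-2)) = A^((n:ℝ)-2*α) := by
      rw [← Real.rpow_add hA]; ring_nf
    have h3 : A^((n:ℝ)-2*α) ≤ F^((n:ℝ)-2*α) := by
      apply rpow_le_rpow hA.le hAF
      have : (2:ℝ) ≤ (n:ℝ) := by exact_mod_cast hn
      nlinarith
    calc A^((n:ℝ)*(1-α)) * W^(n-2) ≤ A^((n:ℝ)*(1-α)) * (X^(n-2) * A^(α*((n:ℝ)-2))) := by
          rw [← e1]
          exact mul_le_mul_of_nonneg_left w1 (rpow_pos_of_pos hA _).le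
      _ = A^((n:ℝ)-2*α) * X^(n-2) := by rw [← h2]; ring
      _ ≤ F^((n:ℝ)-2*α) * X^(n-2) := mul_le_mul_of_nonneg_right h3 (pow_nonneg hX _)
  · -- α ≥ 0
    have w1 : W^(n-2) ≤ (X * F^α)^(n-2) := pow_le_pow_left₀ hW (hW1 hpos) _
    have e1 : (X * F^α)^(n-2) = X^(n-2) * F^(α*((n:ℝ)-2)) := by
      rw [mul_pow, pow_eq F hF]
    have hCC : (if α ≤ 1 then A else B)^((n:ℝ)*(1-α)) ≤ F^((n:ℝ)*(1-α)) := by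
      rcases le_or_gt α 1 with h1 | h1
      · rw [if_pos h1]
        apply rpow_le_rpow hA.le hAF
        have : (0:ℝ) ≤ (n:ℝ) := Nat.cast_nonneg n
        nlinarith
      · rw [if_neg (not_le.2 h1)]
        apply rpow_le_rpow_of_nonpos hF hFB
        have : (0:ℝ) ≤ (n:ℝ) := Nat.cast_nonneg n
        nlinarith
    have h2 : F^((n:ℝ)*(1-α)) * F^(α*((n:ℝ)-2)) = F^((n:ℝ)-2*α) := by
      rw [← Real.rpow_add hF]; ring_nf
    have hCC0 : 0 ≤ (if α ≤ 1 then A else B)^((n:ℝ)*(1-α)) := by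
      apply rpow_nonneg
      split <;> [exact hA.le; linarith]
    calc (if α ≤ 1 then A else B)^((n:ℝ)*(1-α)) * W^(n-2)
        ≤ (if α ≤ 1 then A else B)^((n:ℝ)*(1-α)) * (X^(n-2) * F^(α*((n:ℝ)-2))) := by
          rw [← e1]; exact mul_le_mul_of_nonneg_left w1 hCC0
      _ ≤ F^((n:ℝ)*(1-α)) * (X^(n-2) * F^(α*((n:ℝ)-2))) := by
          apply mul_le_mul_of_nonneg_right hCC
          exact mul_nonneg (pow_nonneg hX _) (rpow_pos_of_pos hF _).le
      _ = F^((n:ℝ)-2*α) * X^(n-2) := by rw [← h2]; ring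

section Prim
variable {a b : ℝ} {φ : ℝ → ℝ} (hab : a < b) (hφ : ContinuousOn φ (Set.Icc a b))
include hab hφ

lemma prim_integrable {x y : ℝ} (hx : x ∈ Set.Icc a b) (hy : y ∈ Set.Icc a b) :
    IntervalIntegrable φ volume x y := by
  apply ContinuousOn.intervalIntegrable
  exact hφ.mono (Set.uIcc_subset_Icc hx hy)

lemma prim_cont : ContinuousOn (fun x => ∫ t in a..x, φ t) (Set.Icc a b) := by
  have := intervalIntegral.continuousOn_primitive_interval
    (f := φ) (μ := volume) (a := a) (b := b) ?_
  · rwa [Set.uIcc_of_le hab.le] at this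
  · rw [Set.uIcc_of_le hab.le]
    exact hφ.integrableOn_Icc

lemma prim_deriv {x : ℝ} (hx : x ∈ Set.Ioo a b) :
    HasDerivAt (fun y => ∫ t in a..y, φ t) (φ x) x := by
  apply intervalIntegral.integral_hasDerivAt_right
    (prim_integrable hab hφ (Set.left_mem_Icc.2 hab.le) (Set.Ioo_subset_Icc_self hx))
  · exact ⟨Set.Icc a b, Icc_mem_nhds hx.1 hx.2, hφ.aestronglyMeasurable measurableSet_Icc⟩
  · exact (hφ x (Set.Ioo_subset_Icc_self hx)).continuousAt (Icc_mem_nhds hx.1 hx.2)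

lemma prim_le_const {x M : ℝ} (hx : x ∈ Set.Icc a b) (hM : ∀ t ∈ Set.Icc a x, φ t ≤ M) :
    (∫ t in a..x, φ t) ≤ (x - a) * M := by
  have h1 : (∫ t in a..x, φ t) ≤ ∫ t in a..x, M := by
    apply intervalIntegral.integral_mono_on hx.1
    · exact prim_integrable hab hφ (Set.left_mem_Icc.2 hab.le) hx
    · exact intervalIntegrable_const
    · exact hM
  simpa using h1

omit hab hφ in
lemma prim_nonneg {x : ℝ} (hx : x ∈ Set.Icc a b) (h0 : ∀ t ∈ Set.Icc a x, 0 ≤ φ t) :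
    0 ≤ ∫ t in a..x, φ t := by
  apply intervalIntegral.integral_nonneg hx.1 h0

lemma prim_mono_int {ψ : ℝ → ℝ} (hψ : ContinuousOn ψ (Set.Icc a b)) {x : ℝ}
    (hx : x ∈ Set.Icc a b) (hle : ∀ t ∈ Set.Icc a x, φ t ≤ ψ t) :
    (∫ t in a..x, φ t) ≤ ∫ t in a..x, ψ t := by
  apply intervalIntegral.integral_mono_on hx.1
  · exact prim_integrable hab hφ (Set.left_mem_Icc.2 hab.le) hx
  · exact prim_integrable hab hψ (Set.left_mem_Icc.2 hab.le) hx
  · exact hle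

end Prim

lemma monoAux {F F' : ℝ → ℝ} {a b : ℝ}
    (hcont : ContinuousOn F (Set.Icc a b)) (hd : ∀ x ∈ Set.Ioo a b, HasDerivAt F (F' x) x)
    (h0 : ∀ x ∈ Set.Ioo a b, 0 ≤ F' x) : MonotoneOn F (Set.Icc a b) := by
  apply monotoneOn_of_deriv_nonneg (convex_Icc a b) hcont
  · rw [interior_Icc]
    exact fun x hx => (hd x hx).differentiableAt.differentiableWithinAt
  · rw [interior_Icc]
    intro x hx
    rw [(hd x hx).deriv]
    exact h0 x hx

structure Ctx (a b : ℝ) (n : ℕ) (f : ℝ → ℝ) : Prop where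
  hab : a < b
  hn : 2 ≤ n
  pos : ∀ x ∈ Set.Icc a b, 0 < f x
  diff : ∀ i < n, DifferentiableOn ℝ (iteratedDerivWithin i f (Set.Icc a b)) (Set.Icc a b)
  nonneg : ∀ i, 1 ≤ i → i ≤ n - 2 → ∀ x ∈ Set.Icc a b, 0 ≤ iteratedDerivWithin i f (Set.Icc a b) x
  gpos : ∀ x ∈ Set.Icc a b, 0 < iteratedDerivWithin (n-1) f (Set.Icc a b) x
  np : ∀ x ∈ Set.Icc a b, iteratedDerivWithin n f (Set.Icc a b) x ≤ 0

namespace Ctx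

variable {a b : ℝ} {n : ℕ} {f : ℝ → ℝ} (hc : Ctx a b n f)
include hc

lemma hderiv {i : ℕ} (hi : i + 1 ≤ n) {x : ℝ} (hx : x ∈ Set.Ioo a b) :
    HasDerivAt (iteratedDerivWithin i f (Set.Icc a b))
      (iteratedDerivWithin (i+1) f (Set.Icc a b) x) x := by
  have hmem : Set.Icc a b ∈ nhds x := Icc_mem_nhds hx.1 hx.2
  have hd : DifferentiableWithinAt ℝ (iteratedDerivWithin i f (Set.Icc a b)) (Set.Icc a b) x :=
    hc.diff i (by omega) x (Set.Ioo_subset_Icc_self hx)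
  have h1 : iteratedDerivWithin (i+1) f (Set.Icc a b) x
      = derivWithin (iteratedDerivWithin i f (Set.Icc a b)) (Set.Icc a b) x := by
    rw [iteratedDerivWithin_succ]
  rw [h1, derivWithin_of_mem_nhds hmem]
  exact (hd.differentiableAt hmem).hasDerivAt

lemma icont {i : ℕ} (hi : i < n) :
    ContinuousOn (iteratedDerivWithin i f (Set.Icc a b)) (Set.Icc a b) :=
  (hc.diff i hi).continuousOn

lemma fcont : ContinuousOn f (Set.Icc a b) := by
  have hn := hc.hn
  have := hc.icont (show 0 < n by omega)
  rwa [iteratedDerivWithin_zero] at this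

lemma gcont : ContinuousOn (iteratedDerivWithin (n-1) f (Set.Icc a b)) (Set.Icc a b) := by
  have hn := hc.hn
  exact hc.icont (by omega)

lemma ganti : AntitoneOn (iteratedDerivWithin (n-1) f (Set.Icc a b)) (Set.Icc a b) := by
  have hn := hc.hn
  have hm : MonotoneOn (fun x => -iteratedDerivWithin (n-1) f (Set.Icc a b) x) (Set.Icc a b) := by
    apply monoAux (F' := fun x => -iteratedDerivWithin n f (Set.Icc a b) x) hc.gcont.neg
    · intro x hx
      have := (hc.hderiv (show n-1+1 ≤ n by omega) hx).neg
      rwa [show n - 1 + 1 = n by omega] at this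
    · intro x hx
      simp only [neg_nonneg]
      exact hc.np x (Set.Ioo_subset_Icc_self hx)
  intro x hx y hy hxy
  have := hm hx hy hxy
  simpa using this

lemma dfnonneg : ∀ x ∈ Set.Icc a b, 0 ≤ iteratedDerivWithin 1 f (Set.Icc a b) x := by
  intro x hx
  rcases eq_or_lt_of_le hc.hn with h2 | h3
  · have h1 : n - 1 = 1 := by omega
    exact le_of_lt (h1 ▸ hc.gpos x hx)
  · exact hc.nonneg 1 le_rfl (by omega) x hx

lemma fmono : MonotoneOn f (Set.Icc a b) := by
  have hn := hc.hn
  apply monoAux (F' := iteratedDerivWithin 1 f (Set.Icc a b)) hc.fcont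
  · intro x hx
    have := hc.hderiv (show 0 + 1 ≤ n by omega) hx
    rwa [iteratedDerivWithin_zero] at this
  · intro x hx
    exact hc.dfnonneg x (Set.Ioo_subset_Icc_self hx)

lemma taylor : ∀ k, k ≤ n - 2 → ∀ x ∈ Set.Icc a b,
    (x-a)^k * iteratedDerivWithin (n-1) f (Set.Icc a b) x
      ≤ (k.factorial : ℝ) * iteratedDerivWithin (n-1-k) f (Set.Icc a b) x := by
  have hn := hc.hn
  intro k
  induction k with
  | zero => intro _ x hx; simp
  | succ k ih =>
    intro hk1 x hx
    have hk : k ≤ n - 2 := by omega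
    set j := n - 2 - k with hj
    have hj1 : 1 ≤ j := by omega
    have hjn : j + 1 = n - 1 - k := by omega
    have hjn2 : j ≤ n - 2 := by omega
    set g := iteratedDerivWithin (n-1) f (Set.Icc a b) with hg
    set D := fun y => ((k+1).factorial : ℝ) * iteratedDerivWithin j f (Set.Icc a b) y
        - (y-a)^(k+1) * g y with hD
    have hmono : MonotoneOn D (Set.Icc a b) := by
      apply monoAux (F' := fun y => ((k+1).factorial : ℝ) * iteratedDerivWithin (j+1) f (Set.Icc a b) y
          - (((k+1:ℕ):ℝ) * (y-a)^k * g y + (y-a)^(k+1) * iteratedDerivWithin n f (Set.Icc a b) y))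
      · apply ContinuousOn.sub
        · exact continuousOn_const.mul (hc.icont (by omega))
        · exact (ContinuousOn.pow (by fun_prop) _).mul hc.gcont
      · intro y hy
        apply HasDerivAt.sub
        · exact (hc.hderiv (by omega) hy).const_mul _
        · have h1 : HasDerivAt (fun y => (y-a)^(k+1)) (((k+1:ℕ):ℝ) * (y-a)^k) y := by
            have := ((hasDerivAt_id y).sub_const a).fun_pow (k+1)
            simpa using this
          have h2 : HasDerivAt g (iteratedDerivWithin n f (Set.Icc a b) y) y := by
            have := hc.hderiv (show (n-1) + 1 ≤ n by omega) hy
            rwa [show n - 1 + 1 = n by omega] at this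
          exact h1.mul h2
      · intro y hy
        have hyI := Set.Ioo_subset_Icc_self hy
        have hya : 0 ≤ y - a := by linarith [hy.1]
        have t1 : (y-a)^k * g y ≤ (k.factorial : ℝ) * iteratedDerivWithin (n-1-k) f (Set.Icc a b) y :=
          ih hk y hyI
        have t2 : (y-a)^(k+1) * iteratedDerivWithin n f (Set.Icc a b) y ≤ 0 :=
          mul_nonpos_of_nonneg_of_nonpos (pow_nonneg hya _) (hc.np y hyI)
        have hfac : ((k+1).factorial : ℝ) = ((k+1:ℕ):ℝ) * (k.factorial : ℝ) := by
          rw [Nat.factorial_succ]; push_cast; ring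
        rw [hjn, hfac]
        have hkpos : (0:ℝ) ≤ ((k+1:ℕ):ℝ) := by positivity
        nlinarith [t1, t2]
    have hDa : 0 ≤ D a := by
      have h0 : 0 ≤ iteratedDerivWithin j f (Set.Icc a b) a :=
        hc.nonneg j hj1 hjn2 a (Set.left_mem_Icc.2 hc.hab.le)
      have h1 : (0:ℝ) ≤ ((k+1).factorial : ℝ) * iteratedDerivWithin j f (Set.Icc a b) a :=
        mul_nonneg (by positivity) h0
      simp only [hD, sub_self]
      simpa using h1
    have hDx : 0 ≤ D x := le_trans hDa (hmono (Set.left_mem_Icc.2 hc.hab.le) hx hx.1)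
    simp only [hD] at hDx
    have hfin : n - 1 - (k+1) = j := by omega
    rw [hfin]
    linarith



section Alpha
variable (α : ℝ)

lemma fal : 0 < f a := hc.pos a (Set.left_mem_Icc.2 hc.hab.le)

lemma fbound {x : ℝ} (hx : x ∈ Set.Icc a b) : f a ≤ f x ∧ f x ≤ f b :=
  ⟨hc.fmono (Set.left_mem_Icc.2 hc.hab.le) hx hx.1,
   hc.fmono hx (Set.right_mem_Icc.2 hc.hab.le) hx.2⟩

omit hc in
lemma falcont (hfc : ContinuousOn f (Set.Icc a b)) (hpos : ∀ x ∈ Set.Icc a b, 0 < f x) :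
    ContinuousOn (fun t => f t ^ α) (Set.Icc a b) :=
  ContinuousOn.rpow_const hfc (fun t ht => Or.inl (hpos t ht).ne')

lemma wnonneg {x : ℝ} (hx : x ∈ Set.Icc a b) : 0 ≤ ∫ t in a..x, f t ^ α :=
  prim_nonneg hx (fun t ht => (Real.rpow_pos_of_pos (hc.pos t ⟨ht.1, le_trans ht.2 hx.2⟩) α).le)

lemma wle_pos (hα : 0 ≤ α) {x : ℝ} (hx : x ∈ Set.Icc a b) :
    (∫ t in a..x, f t ^ α) ≤ (x - a) * f x ^ α := by
  apply prim_le_const hc.hab (falcont α hc.fcont hc.pos) hx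
  intro t ht
  have htI : t ∈ Set.Icc a b := ⟨ht.1, le_trans ht.2 hx.2⟩
  exact Real.rpow_le_rpow (hc.pos t htI).le (hc.fmono htI hx ht.2) hα

lemma wle_neg (hα : α < 0) {x : ℝ} (hx : x ∈ Set.Icc a b) :
    (∫ t in a..x, f t ^ α) ≤ (x - a) * f a ^ α := by
  apply prim_le_const hc.hab (falcont α hc.fcont hc.pos) hx
  intro t ht
  have htI : t ∈ Set.Icc a b := ⟨ht.1, le_trans ht.2 hx.2⟩
  exact Real.rpow_le_rpow_of_nonpos (hc.fal) ((hc.fbound htI).1) hα.le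

lemma taylor2 {x : ℝ} (hx : x ∈ Set.Icc a b) :
    (x-a)^(n-2) * iteratedDerivWithin (n-1) f (Set.Icc a b) x
      ≤ ((n-2).factorial : ℝ) * iteratedDerivWithin 1 f (Set.Icc a b) x := by
  have hn := hc.hn
  have := hc.taylor (n-2) le_rfl x hx
  rwa [show n - 1 - (n-2) = 1 by omega] at this


-- factorial identity
omit hc in
lemma fact_split (hn : 2 ≤ n) : ((n-1).factorial : ℝ) = ((n-1:ℕ):ℝ) * ((n-2).factorial : ℝ) := by
  have h : n - 1 = (n-2) + 1 := by omega
  rw [h, Nat.factorial_succ]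
  push_cast
  ring

-- term1 bound: main Bprime+Taylor chain
lemma term1 (hαn : α ≤ (n:ℝ)) {x : ℝ} (hx : x ∈ Set.Ioo a b) :
    (((n:ℝ)+1-α) * (if α ≤ 1 then f a else f b)^((n:ℝ)*(1-α)) / ((n-1).factorial : ℝ)) *
      (((n-1:ℕ):ℝ) * (∫ t in a..x, f t^α)^(n-2) * f x ^ α *
        iteratedDerivWithin (n-1) f (Set.Icc a b) x)
    ≤ ((n:ℝ)+1-α) * f x ^ ((n:ℝ)-α) * iteratedDerivWithin 1 f (Set.Icc a b) x := by
  have hn := hc.hn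
  have hxI := Set.Ioo_subset_Icc_self hx
  have hA := hc.fal
  have hF := hc.pos x hxI
  have hg := hc.gpos x hxI
  have hDF := hc.dfnonneg x hxI
  have hX : (0:ℝ) ≤ x - a := by linarith [hx.1]
  have hbp := Bprime hn hA (hc.fbound hxI).1 (hc.fbound hxI).2 (hc.wnonneg α hxI) hX
      (fun h => hc.wle_pos α h hxI) (fun h => hc.wle_neg α h hxI)
  have htay := hc.taylor2 hxI
  have hchain : (if α ≤ 1 then f a else f b)^((n:ℝ)*(1-α)) * ((∫ t in a..x, f t^α)^(n-2) *
      iteratedDerivWithin (n-1) f (Set.Icc a b) x)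
      ≤ f x ^ ((n:ℝ)-2*α) * (((n-2).factorial : ℝ) * iteratedDerivWithin 1 f (Set.Icc a b) x) := by
    calc (if α ≤ 1 then f a else f b)^((n:ℝ)*(1-α)) * ((∫ t in a..x, f t^α)^(n-2) *
        iteratedDerivWithin (n-1) f (Set.Icc a b) x)
        ≤ (f x ^ ((n:ℝ)-2*α) * (x-a)^(n-2)) * iteratedDerivWithin (n-1) f (Set.Icc a b) x := by
          have := mul_le_mul_of_nonneg_right hbp hg.le
          calc _ = ((if α ≤ 1 then f a else f b)^((n:ℝ)*(1-α)) * (∫ t in a..x, f t^α)^(n-2)) *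
              iteratedDerivWithin (n-1) f (Set.Icc a b) x := by ring
            _ ≤ _ := this
      _ = f x ^ ((n:ℝ)-2*α) * ((x-a)^(n-2) * iteratedDerivWithin (n-1) f (Set.Icc a b) x) := by ring
      _ ≤ _ := mul_le_mul_of_nonneg_left htay (Real.rpow_pos_of_pos hF _).le
  have hcoefpos : (0:ℝ) ≤ ((n:ℝ)+1-α) * ((n-1:ℕ):ℝ) * f x ^ α := by
    have h1 : (0:ℝ) ≤ (n:ℝ)+1-α := by linarith
    positivity
  have key := mul_le_mul_of_nonneg_left hchain hcoefpos
  have hr : f x ^ α * f x ^ ((n:ℝ)-2*α) = f x ^ ((n:ℝ)-α) := by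
    rw [← Real.rpow_add hF]; ring_nf
  have hfs := fact_split hn
  have hK1 : (0:ℝ) < ((n-1).factorial : ℝ) := by positivity
  rw [div_mul_eq_mul_div, div_le_iff₀ hK1]
  calc ((n:ℝ)+1-α) * (if α ≤ 1 then f a else f b)^((n:ℝ)*(1-α)) *
      (((n-1:ℕ):ℝ) * (∫ t in a..x, f t^α)^(n-2) * f x ^ α *
        iteratedDerivWithin (n-1) f (Set.Icc a b) x)
      = (((n:ℝ)+1-α) * ((n-1:ℕ):ℝ) * f x ^ α) *
        ((if α ≤ 1 then f a else f b)^((n:ℝ)*(1-α)) * ((∫ t in a..x, f t^α)^(n-2) *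
          iteratedDerivWithin (n-1) f (Set.Icc a b) x)) := by ring
    _ ≤ (((n:ℝ)+1-α) * ((n-1:ℕ):ℝ) * f x ^ α) *
        (f x ^ ((n:ℝ)-2*α) * (((n-2).factorial : ℝ) * iteratedDerivWithin 1 f (Set.Icc a b) x)) := key
    _ = ((n:ℝ)+1-α) * f x ^ ((n:ℝ)-α) * iteratedDerivWithin 1 f (Set.Icc a b) x *
        ((n-1).factorial : ℝ) := by
        rw [hfs]
        linear_combination (((n:ℝ)+1-α) * ((n-1:ℕ):ℝ) * ((n-2).factorial : ℝ) *
          iteratedDerivWithin 1 f (Set.Icc a b) x) * hr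

-- term1 bound for negative α (keeps f a)
lemma term1neg (hneg : α < 0) {x : ℝ} (hx : x ∈ Set.Ioo a b) :
    (((n:ℝ)+1-α) * (f a)^((n:ℝ)*(1-α)) / ((n-1).factorial : ℝ)) *
      (((n-1:ℕ):ℝ) * (∫ t in a..x, f t^α)^(n-2) * f x ^ α *
        iteratedDerivWithin (n-1) f (Set.Icc a b) x) * f x ^ α
    ≤ ((n:ℝ)+1-α) * ((f a)^((n:ℝ)-2*α) * f x ^ (2*α)) *
        iteratedDerivWithin 1 f (Set.Icc a b) x := by
  have hn := hc.hn
  have hxI := Set.Ioo_subset_Icc_self hx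
  have hA := hc.fal
  have hF := hc.pos x hxI
  have hg := hc.gpos x hxI
  have hDF := hc.dfnonneg x hxI
  have hX : (0:ℝ) ≤ x - a := by linarith [hx.1]
  have hcast : ((n-2:ℕ):ℝ) = (n:ℝ) - 2 := by push_cast [Nat.cast_sub hn]; ring
  have hbp : (f a)^((n:ℝ)*(1-α)) * (∫ t in a..x, f t^α)^(n-2)
      ≤ (f a)^((n:ℝ)-2*α) * (x-a)^(n-2) := by
    have w1 : (∫ t in a..x, f t^α)^(n-2) ≤ ((x-a) * (f a)^α)^(n-2) :=
      pow_le_pow_left₀ (hc.wnonneg α hxI) (hc.wle_neg α hneg hxI) _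
    have e1 : ((x-a) * (f a)^α)^(n-2) = (x-a)^(n-2) * (f a)^(α*((n:ℝ)-2)) := by
      rw [mul_pow, ← Real.rpow_natCast ((f a)^α) (n-2), ← Real.rpow_mul hA.le, hcast]
    have h2 : (f a)^((n:ℝ)*(1-α)) * (f a)^(α*((n:ℝ)-2)) = (f a)^((n:ℝ)-2*α) := by
      rw [← Real.rpow_add hA]; ring_nf
    calc (f a)^((n:ℝ)*(1-α)) * (∫ t in a..x, f t^α)^(n-2)
        ≤ (f a)^((n:ℝ)*(1-α)) * ((x-a)^(n-2) * (f a)^(α*((n:ℝ)-2))) := by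
          rw [← e1]; exact mul_le_mul_of_nonneg_left w1 (Real.rpow_pos_of_pos hA _).le
      _ = (f a)^((n:ℝ)-2*α) * (x-a)^(n-2) := by rw [← h2]; ring
  have htay := hc.taylor2 hxI
  have hchain : (f a)^((n:ℝ)*(1-α)) * ((∫ t in a..x, f t^α)^(n-2) *
      iteratedDerivWithin (n-1) f (Set.Icc a b) x)
      ≤ (f a)^((n:ℝ)-2*α) * (((n-2).factorial : ℝ) * iteratedDerivWithin 1 f (Set.Icc a b) x) := by
    calc (f a)^((n:ℝ)*(1-α)) * ((∫ t in a..x, f t^α)^(n-2) *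
        iteratedDerivWithin (n-1) f (Set.Icc a b) x)
        ≤ ((f a)^((n:ℝ)-2*α) * (x-a)^(n-2)) * iteratedDerivWithin (n-1) f (Set.Icc a b) x := by
          have := mul_le_mul_of_nonneg_right hbp hg.le
          calc _ = ((f a)^((n:ℝ)*(1-α)) * (∫ t in a..x, f t^α)^(n-2)) *
              iteratedDerivWithin (n-1) f (Set.Icc a b) x := by ring
            _ ≤ _ := this
      _ = (f a)^((n:ℝ)-2*α) * ((x-a)^(n-2) * iteratedDerivWithin (n-1) f (Set.Icc a b) x) := by ring
      _ ≤ _ := mul_le_mul_of_nonneg_left htay (Real.rpow_pos_of_pos hA _).le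
  have hcoefpos : (0:ℝ) ≤ ((n:ℝ)+1-α) * ((n-1:ℕ):ℝ) * f x ^ (2*α) := by
    have h2 : (2:ℝ) ≤ (n:ℝ) := by exact_mod_cast hn
    have h1 : (0:ℝ) ≤ (n:ℝ)+1-α := by linarith
    positivity
  have key := mul_le_mul_of_nonneg_left hchain hcoefpos
  have hr : f x ^ α * f x ^ α = f x ^ (2*α) := by
    rw [← Real.rpow_add hF]; ring_nf
  have hfs := fact_split hn
  have hK1 : (0:ℝ) < ((n-1).factorial : ℝ) := by positivity
  rw [div_mul_eq_mul_div, div_mul_eq_mul_div, div_le_iff₀ hK1]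
  calc ((n:ℝ)+1-α) * (f a)^((n:ℝ)*(1-α)) *
      (((n-1:ℕ):ℝ) * (∫ t in a..x, f t^α)^(n-2) * f x ^ α *
        iteratedDerivWithin (n-1) f (Set.Icc a b) x) * f x ^ α
      = (((n:ℝ)+1-α) * ((n-1:ℕ):ℝ) * (f x ^ α * f x ^ α)) *
        ((f a)^((n:ℝ)*(1-α)) * ((∫ t in a..x, f t^α)^(n-2) *
          iteratedDerivWithin (n-1) f (Set.Icc a b) x)) := by ring
    _ = (((n:ℝ)+1-α) * ((n-1:ℕ):ℝ) * f x ^ (2*α)) *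
        ((f a)^((n:ℝ)*(1-α)) * ((∫ t in a..x, f t^α)^(n-2) *
          iteratedDerivWithin (n-1) f (Set.Icc a b) x)) := by rw [hr]
    _ ≤ (((n:ℝ)+1-α) * ((n-1:ℕ):ℝ) * f x ^ (2*α)) *
        ((f a)^((n:ℝ)-2*α) * (((n-2).factorial : ℝ) * iteratedDerivWithin 1 f (Set.Icc a b) x)) := key
    _ = ((n:ℝ)+1-α) * ((f a)^((n:ℝ)-2*α) * f x ^ (2*α)) *
        iteratedDerivWithin 1 f (Set.Icc a b) x * ((n-1).factorial : ℝ) := by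
        rw [hfs]; ring


lemma hfprime {x : ℝ} (hx : x ∈ Set.Ioo a b) :
    HasDerivAt f (iteratedDerivWithin 1 f (Set.Icc a b) x) x := by
  have hn := hc.hn
  have := hc.hderiv (show 0 + 1 ≤ n by omega) hx
  rwa [iteratedDerivWithin_zero] at this

lemma hgprime {x : ℝ} (hx : x ∈ Set.Ioo a b) :
    HasDerivAt (iteratedDerivWithin (n-1) f (Set.Icc a b))
      (iteratedDerivWithin n f (Set.Icc a b) x) x := by
  have hn := hc.hn
  have := hc.hderiv (show (n-1) + 1 ≤ n by omega) hx
  rwa [show n - 1 + 1 = n by omega] at this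

lemma hwpow {x : ℝ} (hx : x ∈ Set.Ioo a b) :
    HasDerivAt (fun y => (∫ t in a..y, f t ^ α)^(n-1))
      (((n-1:ℕ):ℝ) * (∫ t in a..x, f t ^ α)^(n-2) * f x ^ α) x := by
  have hn := hc.hn
  have hw' : HasDerivAt (fun y => ∫ t in a..y, f t ^ α) (f x ^ α) x :=
    prim_deriv hc.hab (falcont α hc.fcont hc.pos) hx
  have := hw'.pow (n-1)
  rwa [show n - 1 - 1 = n - 2 by omega] at this

lemma bstar (hα : 0 < α) (hαn : α ≤ (n:ℝ)) {x : ℝ} (hx : x ∈ Set.Icc a b) :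
    (((n:ℝ)+1-α) * (if α ≤ 1 then f a else f b)^((n:ℝ)*(1-α)) / ((n-1).factorial : ℝ)) *
      (∫ t in a..x, f t ^ α)^(n-1) * iteratedDerivWithin (n-1) f (Set.Icc a b) x
    ≤ f x ^ ((n:ℝ)+1-α) := by
  have hn := hc.hn
  set E := ((n:ℝ)+1-α) * (if α ≤ 1 then f a else f b)^((n:ℝ)*(1-α)) / ((n-1).factorial : ℝ)
    with hE
  have hE0 : 0 ≤ E := by
    have h1 : (0:ℝ) ≤ (n:ℝ)+1-α := by linarith
    have h2 : (0:ℝ) ≤ (if α ≤ 1 then f a else f b)^((n:ℝ)*(1-α)) := by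
      apply Real.rpow_nonneg
      split
      · exact hc.fal.le
      · exact (hc.pos b (Set.right_mem_Icc.2 hc.hab.le)).le
    positivity
  set M := fun y => f y ^ ((n:ℝ)+1-α)
      - E * (∫ t in a..y, f t ^ α)^(n-1) * iteratedDerivWithin (n-1) f (Set.Icc a b) y with hM
  have hmono : MonotoneOn M (Set.Icc a b) := by
    apply monoAux (F' := fun y =>
      iteratedDerivWithin 1 f (Set.Icc a b) y * (((n:ℝ)+1-α)) * f y ^ ((n:ℝ)-α)
      - ((E * (((n-1:ℕ):ℝ) * (∫ t in a..y, f t ^ α)^(n-2) * f y ^ α)) *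
          iteratedDerivWithin (n-1) f (Set.Icc a b) y
        + (E * (∫ t in a..y, f t ^ α)^(n-1)) * iteratedDerivWithin n f (Set.Icc a b) y))
    · apply ContinuousOn.sub
      · exact ContinuousOn.rpow_const hc.fcont (fun t ht => Or.inl (hc.pos t ht).ne')
      · exact ((continuousOn_const.mul ((prim_cont hc.hab (falcont α hc.fcont hc.pos)).pow _)).mul
          hc.gcont)
    · intro y hy
      have h1 : HasDerivAt (fun z => f z ^ ((n:ℝ)+1-α))
          (iteratedDerivWithin 1 f (Set.Icc a b) y * ((n:ℝ)+1-α) * f y ^ ((n:ℝ)-α)) y := by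
        have := (hc.hfprime hy).rpow_const (p := (n:ℝ)+1-α)
          (Or.inl (hc.pos y (Set.Ioo_subset_Icc_self hy)).ne')
        rwa [show (n:ℝ)+1-α-1 = (n:ℝ)-α by ring] at this
      have h2 := ((hc.hwpow α hy).const_mul E).mul (hc.hgprime hy)
      exact h1.sub h2
    · intro y hy
      have hyI := Set.Ioo_subset_Icc_self hy
      have ht1 := hc.term1 α hαn hy
      have hW0 : (0:ℝ) ≤ (∫ t in a..y, f t ^ α)^(n-1) := pow_nonneg (hc.wnonneg α hyI) _
      have hnp := hc.np y hyI
      have hsec : (E * (∫ t in a..y, f t ^ α)^(n-1)) * iteratedDerivWithin n f (Set.Icc a b) y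
          ≤ 0 := mul_nonpos_of_nonneg_of_nonpos (mul_nonneg hE0 hW0) hnp
      have heq : E * (((n-1:ℕ):ℝ) * (∫ t in a..y, f t ^ α)^(n-2) * f y ^ α) *
          iteratedDerivWithin (n-1) f (Set.Icc a b) y
          = E * (((n-1:ℕ):ℝ) * (∫ t in a..y, f t ^ α)^(n-2) * f y ^ α *
            iteratedDerivWithin (n-1) f (Set.Icc a b) y) := by ring
      rw [hE] at heq
      have ht1' : E * (((n-1:ℕ):ℝ) * (∫ t in a..y, f t ^ α)^(n-2) * f y ^ α) *
          iteratedDerivWithin (n-1) f (Set.Icc a b) y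
          ≤ ((n:ℝ)+1-α) * f y ^ ((n:ℝ)-α) * iteratedDerivWithin 1 f (Set.Icc a b) y := by
        rw [hE, heq]; exact ht1
      nlinarith [ht1', hsec]
  have hMa : 0 ≤ M a := by
    have : (∫ t in a..a, f t ^ α) = 0 := intervalIntegral.integral_same
    simp only [hM, this, zero_pow (show n - 1 ≠ 0 by omega), mul_zero, zero_mul, sub_zero]
    exact (Real.rpow_pos_of_pos hc.fal _).le
  have := le_trans hMa (hmono (Set.left_mem_Icc.2 hc.hab.le) hx hx.1)
  simp only [hM] at this
  linarith


lemma hfalpha {x : ℝ} (hx : x ∈ Set.Ioo a b) :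
    HasDerivAt (fun y => f y ^ α)
      (iteratedDerivWithin 1 f (Set.Icc a b) x * α * f x ^ (α - 1)) x :=
  (hc.hfprime hx).rpow_const (Or.inl (hc.pos x (Set.Ioo_subset_Icc_self hx)).ne')

lemma hfnpow {x : ℝ} (hx : x ∈ Set.Ioo a b) :
    HasDerivAt (fun y => f y ^ (n+1))
      (((n:ℝ)+1) * f x ^ n * iteratedDerivWithin 1 f (Set.Icc a b) x) x := by
  have := (hc.hfprime hx).fun_pow (n+1)
  simp only [Nat.add_sub_cancel] at this
  refine this.congr_deriv ?_
  push_cast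
  ring

lemma rpow_to_npow {x : ℝ} (hx : x ∈ Set.Icc a b) : f x ^ ((n:ℝ)) = f x ^ (n:ℕ) :=
  Real.rpow_natCast (f x) n

lemma Epos (hα : 0 ≤ α) (hαn : α ≤ (n:ℝ)) {x : ℝ} (hx : x ∈ Set.Icc a b) :
    (((n:ℝ)+1-α) * (if α ≤ 1 then f a else f b)^((n:ℝ)*(1-α)) / ((n-1).factorial : ℝ)) *
      (∫ t in a..x, f t ^ α)^(n-1) * f x ^ α * iteratedDerivWithin (n-1) f (Set.Icc a b) x
    ≤ f x ^ (n+1) - f a ^ (n+1) := by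
  have hn := hc.hn
  set E := ((n:ℝ)+1-α) * (if α ≤ 1 then f a else f b)^((n:ℝ)*(1-α)) / ((n-1).factorial : ℝ)
    with hE
  have hE0 : 0 ≤ E := by
    have h1 : (0:ℝ) ≤ (n:ℝ)+1-α := by linarith
    have h2 : (0:ℝ) ≤ (if α ≤ 1 then f a else f b)^((n:ℝ)*(1-α)) := by
      apply Real.rpow_nonneg
      split
      · exact hc.fal.le
      · exact (hc.pos b (Set.right_mem_Icc.2 hc.hab.le)).le
    positivity
  set M := fun y => f y ^ (n+1)
      - E * (∫ t in a..y, f t ^ α)^(n-1) * f y ^ α *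
        iteratedDerivWithin (n-1) f (Set.Icc a b) y with hM
  have hmono : MonotoneOn M (Set.Icc a b) := by
    apply monoAux (F' := fun y =>
      ((n:ℝ)+1) * f y ^ n * iteratedDerivWithin 1 f (Set.Icc a b) y
      - (((E * (((n-1:ℕ):ℝ) * (∫ t in a..y, f t ^ α)^(n-2) * f y ^ α)) * (f y ^ α)
          + (E * (∫ t in a..y, f t ^ α)^(n-1)) *
            (iteratedDerivWithin 1 f (Set.Icc a b) y * α * f y ^ (α-1))) *
          iteratedDerivWithin (n-1) f (Set.Icc a b) y
        + ((E * (∫ t in a..y, f t ^ α)^(n-1)) * (f y ^ α)) *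
            iteratedDerivWithin n f (Set.Icc a b) y))
    · apply ContinuousOn.sub
      · exact hc.fcont.pow _
      · exact (((continuousOn_const.mul
            ((prim_cont hc.hab (falcont α hc.fcont hc.pos)).pow _)).mul
            (falcont α hc.fcont hc.pos)).mul hc.gcont)
    · intro y hy
      have h2 := ((((hc.hwpow α hy).const_mul E).mul (hc.hfalpha α hy)).mul (hc.hgprime hy))
      exact (hc.hfnpow hy).sub h2
    · intro y hy
      have hyI := Set.Ioo_subset_Icc_self hy
      have hF := hc.pos y hyI
      have hDF := hc.dfnonneg y hyI
      have hg := hc.gpos y hyI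
      have hW0 : (0:ℝ) ≤ (∫ t in a..y, f t ^ α) := hc.wnonneg α hyI
      have hWp : (0:ℝ) ≤ (∫ t in a..y, f t ^ α)^(n-1) := pow_nonneg hW0 _
      have hnp := hc.np y hyI
      -- Term A
      have htA : (E * (((n-1:ℕ):ℝ) * (∫ t in a..y, f t ^ α)^(n-2) * f y ^ α)) * (f y ^ α) *
          iteratedDerivWithin (n-1) f (Set.Icc a b) y
          ≤ ((n:ℝ)+1-α) * f y ^ (n:ℕ) * iteratedDerivWithin 1 f (Set.Icc a b) y := by
        have ht1 := hc.term1 α hαn hy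
        have ht1f := mul_le_mul_of_nonneg_right ht1 (Real.rpow_pos_of_pos hF α).le
        have hre : f y ^ ((n:ℝ)-α) * f y ^ α = f y ^ (n:ℕ) := by
          rw [← Real.rpow_add hF, ← Real.rpow_natCast (f y) n]
          ring_nf
        calc (E * (((n-1:ℕ):ℝ) * (∫ t in a..y, f t ^ α)^(n-2) * f y ^ α)) * (f y ^ α) *
            iteratedDerivWithin (n-1) f (Set.Icc a b) y
            = (E * (((n-1:ℕ):ℝ) * (∫ t in a..y, f t ^ α)^(n-2) * f y ^ α *
              iteratedDerivWithin (n-1) f (Set.Icc a b) y)) * (f y ^ α) := by ring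
          _ ≤ (((n:ℝ)+1-α) * f y ^ ((n:ℝ)-α) * iteratedDerivWithin 1 f (Set.Icc a b) y) *
              (f y ^ α) := by
              apply mul_le_mul_of_nonneg_right _ (Real.rpow_pos_of_pos hF α).le
              calc E * (((n-1:ℕ):ℝ) * (∫ t in a..y, f t ^ α)^(n-2) * f y ^ α *
                  iteratedDerivWithin (n-1) f (Set.Icc a b) y)
                  = E * (((n-1:ℕ):ℝ) * (∫ t in a..y, f t ^ α)^(n-2) * f y ^ α) *
                    iteratedDerivWithin (n-1) f (Set.Icc a b) y := by ring
                _ ≤ _ := by rw [hE, mul_assoc]; exact ht1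
          _ = ((n:ℝ)+1-α) * (f y ^ ((n:ℝ)-α) * f y ^ α) *
              iteratedDerivWithin 1 f (Set.Icc a b) y := by ring
          _ = _ := by rw [hre]
      -- Term B
      have htB : (E * (∫ t in a..y, f t ^ α)^(n-1)) *
          (iteratedDerivWithin 1 f (Set.Icc a b) y * α * f y ^ (α-1)) *
          iteratedDerivWithin (n-1) f (Set.Icc a b) y
          ≤ α * f y ^ (n:ℕ) * iteratedDerivWithin 1 f (Set.Icc a b) y := by
        rcases eq_or_lt_of_le hα with h0 | h0
        · rw [← h0]; simp
        · have hbs := hc.bstar α h0 hαn hyI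
          rw [← hE] at hbs
          have hcoef : 0 ≤ α * f y ^ (α-1) * iteratedDerivWithin 1 f (Set.Icc a b) y := by
            have := Real.rpow_pos_of_pos hF (α-1)
            positivity
          have := mul_le_mul_of_nonneg_right hbs hcoef
          have hre : f y ^ ((n:ℝ)+1-α) * (α * f y ^ (α-1) *
              iteratedDerivWithin 1 f (Set.Icc a b) y)
              = α * f y ^ (n:ℕ) * iteratedDerivWithin 1 f (Set.Icc a b) y := by
            have : f y ^ ((n:ℝ)+1-α) * f y ^ (α-1) = f y ^ (n:ℕ) := by
              rw [← Real.rpow_add hF, ← Real.rpow_natCast (f y) n]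
              ring_nf
            calc f y ^ ((n:ℝ)+1-α) * (α * f y ^ (α-1) *
                iteratedDerivWithin 1 f (Set.Icc a b) y)
                = (f y ^ ((n:ℝ)+1-α) * f y ^ (α-1)) * α *
                  iteratedDerivWithin 1 f (Set.Icc a b) y := by ring
              _ = _ := by rw [this]; ring
          rw [hre] at this
          calc (E * (∫ t in a..y, f t ^ α)^(n-1)) *
              (iteratedDerivWithin 1 f (Set.Icc a b) y * α * f y ^ (α-1)) *
              iteratedDerivWithin (n-1) f (Set.Icc a b) y
              = (E * (∫ t in a..y, f t ^ α)^(n-1) *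
                iteratedDerivWithin (n-1) f (Set.Icc a b) y) *
                (α * f y ^ (α-1) * iteratedDerivWithin 1 f (Set.Icc a b) y) := by ring
            _ ≤ _ := this
      -- Term C
      have htC : ((E * (∫ t in a..y, f t ^ α)^(n-1)) * (f y ^ α)) *
          iteratedDerivWithin n f (Set.Icc a b) y ≤ 0 := by
        apply mul_nonpos_of_nonneg_of_nonpos _ hnp
        exact mul_nonneg (mul_nonneg hE0 hWp) (Real.rpow_pos_of_pos hF α).le
      nlinarith [htA, htB, htC]
  have hMa : M a = f a ^ (n+1) := by
    have h0 : (∫ t in a..a, f t ^ α) = 0 := intervalIntegral.integral_same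
    simp only [hM, h0, zero_pow (show n - 1 ≠ 0 by omega), mul_zero, zero_mul, sub_zero]
  have := hmono (Set.left_mem_Icc.2 hc.hab.le) hx hx.1
  rw [hMa] at this
  simp only [hM] at this
  linarith


lemma Eneg (hneg : α < 0) {x : ℝ} (hx : x ∈ Set.Icc a b) :
    (((n:ℝ)+1-α) * (f a)^((n:ℝ)*(1-α)) / ((n-1).factorial : ℝ)) *
      (∫ t in a..x, f t ^ α)^(n-1) * f x ^ α * iteratedDerivWithin (n-1) f (Set.Icc a b) x
    ≤ f x ^ (n+1) - (f a)^((n:ℝ)+1-α) * f x ^ α := by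
  have hn := hc.hn
  have hA := hc.fal
  set E := ((n:ℝ)+1-α) * (f a)^((n:ℝ)*(1-α)) / ((n-1).factorial : ℝ) with hE
  have hn2 : (2:ℝ) ≤ (n:ℝ) := by exact_mod_cast hn
  have hE0 : 0 ≤ E := by
    have h1 : (0:ℝ) ≤ (n:ℝ)+1-α := by linarith
    have h2 : (0:ℝ) ≤ (f a)^((n:ℝ)*(1-α)) := Real.rpow_nonneg hA.le _
    positivity
  set M := fun y => f y ^ (n+1) - (f a)^((n:ℝ)+1-α) * f y ^ α
      - E * (∫ t in a..y, f t ^ α)^(n-1) * f y ^ α *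
        iteratedDerivWithin (n-1) f (Set.Icc a b) y with hM
  have hmono : MonotoneOn M (Set.Icc a b) := by
    apply monoAux (F' := fun y =>
      ((n:ℝ)+1) * f y ^ n * iteratedDerivWithin 1 f (Set.Icc a b) y
      - (f a)^((n:ℝ)+1-α) * (iteratedDerivWithin 1 f (Set.Icc a b) y * α * f y ^ (α-1))
      - (((E * (((n-1:ℕ):ℝ) * (∫ t in a..y, f t ^ α)^(n-2) * f y ^ α)) * (f y ^ α)
          + (E * (∫ t in a..y, f t ^ α)^(n-1)) *
            (iteratedDerivWithin 1 f (Set.Icc a b) y * α * f y ^ (α-1))) *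
          iteratedDerivWithin (n-1) f (Set.Icc a b) y
        + ((E * (∫ t in a..y, f t ^ α)^(n-1)) * (f y ^ α)) *
            iteratedDerivWithin n f (Set.Icc a b) y))
    · apply ContinuousOn.sub
      · apply ContinuousOn.sub
        · exact hc.fcont.pow _
        · exact continuousOn_const.mul (falcont α hc.fcont hc.pos)
      · exact (((continuousOn_const.mul
            ((prim_cont hc.hab (falcont α hc.fcont hc.pos)).pow _)).mul
            (falcont α hc.fcont hc.pos)).mul hc.gcont)
    · intro y hy
      have h2 := ((((hc.hwpow α hy).const_mul E).mul (hc.hfalpha α hy)).mul (hc.hgprime hy))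
      exact ((hc.hfnpow hy).sub ((hc.hfalpha α hy).const_mul _)).sub h2
    · intro y hy
      have hyI := Set.Ioo_subset_Icc_self hy
      have hF := hc.pos y hyI
      have hDF := hc.dfnonneg y hyI
      have hg := hc.gpos y hyI
      have hW0 : (0:ℝ) ≤ (∫ t in a..y, f t ^ α) := hc.wnonneg α hyI
      have hWp : (0:ℝ) ≤ (∫ t in a..y, f t ^ α)^(n-1) := pow_nonneg hW0 _
      have hnp := hc.np y hyI
      have hfα1 : (0:ℝ) < f y ^ (α-1) := Real.rpow_pos_of_pos hF _
      -- Term A via term1neg + scalar_neg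
      have htA : (E * (((n-1:ℕ):ℝ) * (∫ t in a..y, f t ^ α)^(n-2) * f y ^ α)) * (f y ^ α) *
          iteratedDerivWithin (n-1) f (Set.Icc a b) y
          ≤ (((n:ℝ)+1) * f y ^ (n:ℕ) + (-α) * ((f a)^((n:ℝ)+1-α) * f y ^ (α-1))) *
            iteratedDerivWithin 1 f (Set.Icc a b) y := by
        have ht1 := hc.term1neg α hneg hy
        have hsc := scalar_neg hn hneg hA (hc.fbound hyI).1
        have hsc' := mul_le_mul_of_nonneg_right hsc hDF
        calc (E * (((n-1:ℕ):ℝ) * (∫ t in a..y, f t ^ α)^(n-2) * f y ^ α)) * (f y ^ α) *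
            iteratedDerivWithin (n-1) f (Set.Icc a b) y
            = E * (((n-1:ℕ):ℝ) * (∫ t in a..y, f t ^ α)^(n-2) * f y ^ α *
              iteratedDerivWithin (n-1) f (Set.Icc a b) y) * (f y ^ α) := by ring
          _ ≤ ((n:ℝ)+1-α) * ((f a)^((n:ℝ)-2*α) * f y ^ (2*α)) *
              iteratedDerivWithin 1 f (Set.Icc a b) y := by
              rw [hE, mul_assoc, ← mul_assoc]
              have := ht1
              calc ((n:ℝ)+1-α) * (f a)^((n:ℝ)*(1-α)) / ((n-1).factorial : ℝ) *
                  (((n-1:ℕ):ℝ) * (∫ t in a..y, f t ^ α)^(n-2) * f y ^ α *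
                    iteratedDerivWithin (n-1) f (Set.Icc a b) y) * f y ^ α
                  = ((n:ℝ)+1-α) * (f a)^((n:ℝ)*(1-α)) / ((n-1).factorial : ℝ) *
                  (((n-1:ℕ):ℝ) * (∫ t in a..y, f t ^ α)^(n-2) * f y ^ α *
                    iteratedDerivWithin (n-1) f (Set.Icc a b) y) * f y ^ α := rfl
                _ ≤ _ := by
                    have ht1' := hc.term1neg α hneg hy
                    calc ((n:ℝ)+1-α) * (f a)^((n:ℝ)*(1-α)) / ((n-1).factorial : ℝ) *
                        (((n-1:ℕ):ℝ) * (∫ t in a..y, f t ^ α)^(n-2) * f y ^ α *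
                          iteratedDerivWithin (n-1) f (Set.Icc a b) y) * f y ^ α
                        = ((n:ℝ)+1-α) * (f a)^((n:ℝ)*(1-α)) / ((n-1).factorial : ℝ) *
                          (((n-1:ℕ):ℝ) * (∫ t in a..y, f t ^ α)^(n-2) * f y ^ α *
                            iteratedDerivWithin (n-1) f (Set.Icc a b) y) * f y ^ α := rfl
                      _ ≤ _ := by
                          have heq : ((n:ℝ)+1-α) * (f a)^((n:ℝ)*(1-α)) / ((n-1).factorial : ℝ) *
                              (((n-1:ℕ):ℝ) * (∫ t in a..y, f t ^ α)^(n-2) * f y ^ α *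
                                iteratedDerivWithin (n-1) f (Set.Icc a b) y) * f y ^ α
                              = ((n:ℝ)+1-α) * (f a)^((n:ℝ)*(1-α)) / ((n-1).factorial : ℝ) *
                              (((n-1:ℕ):ℝ) * (∫ t in a..y, f t ^ α)^(n-2) * f y ^ α *
                                iteratedDerivWithin (n-1) f (Set.Icc a b) y) * f y ^ α := rfl
                          rw [heq]
                          exact ht1'
          _ ≤ _ := by
              have hre : f y ^ (2*α) * f y ^ (α-1) = f y ^ (2*α) * f y ^ (α-1) := rfl
              nlinarith [hsc']
      -- Term B nonpositive
      have htB : (E * (∫ t in a..y, f t ^ α)^(n-1)) *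
          (iteratedDerivWithin 1 f (Set.Icc a b) y * α * f y ^ (α-1)) *
          iteratedDerivWithin (n-1) f (Set.Icc a b) y ≤ 0 := by
        have hpos : 0 ≤ (E * (∫ t in a..y, f t ^ α)^(n-1)) *
            (iteratedDerivWithin 1 f (Set.Icc a b) y * f y ^ (α-1)) *
            iteratedDerivWithin (n-1) f (Set.Icc a b) y := by positivity
        nlinarith [hpos]
      -- Term C nonpositive
      have htC : ((E * (∫ t in a..y, f t ^ α)^(n-1)) * (f y ^ α)) *
          iteratedDerivWithin n f (Set.Icc a b) y ≤ 0 := by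
        apply mul_nonpos_of_nonneg_of_nonpos _ hnp
        exact mul_nonneg (mul_nonneg hE0 hWp) (Real.rpow_pos_of_pos hF α).le
      nlinarith [htA, htB, htC]
  have hMa : M a = 0 := by
    have h0 : (∫ t in a..a, f t ^ α) = 0 := intervalIntegral.integral_same
    have hre : (f a)^((n:ℝ)+1-α) * (f a) ^ α = f a ^ (n+1) := by
      rw [← Real.rpow_add hA, ← Real.rpow_natCast (f a) (n+1)]
      push_cast
      ring_nf
    simp only [hM, h0, zero_pow (show n - 1 ≠ 0 by omega), mul_zero, zero_mul, sub_zero, hre]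
    ring
  have := hmono (Set.left_mem_Icc.2 hc.hab.le) hx hx.1
  rw [hMa] at this
  simp only [hM] at this
  linarith


section H
variable (h : ℝ → ℝ)

omit hc in
lemma fahcont (hhcont : ContinuousOn h (Set.Icc a b))
    (hfc : ContinuousOn f (Set.Icc a b)) (hpos : ∀ x ∈ Set.Icc a b, 0 < f x) :
    ContinuousOn (fun t => f t ^ α * h t) (Set.Icc a b) :=
  (falcont α hfc hpos).mul hhcont

lemma hunonneg (hh0 : ∀ x ∈ Set.Icc a b, 0 ≤ h x) {x : ℝ} (hx : x ∈ Set.Icc a b) :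
    0 ≤ ∫ t in a..x, f t ^ α * h t := by
  apply prim_nonneg hx
  intro t ht
  have htI : t ∈ Set.Icc a b := ⟨ht.1, le_trans ht.2 hx.2⟩
  exact mul_nonneg (Real.rpow_pos_of_pos (hc.pos t htI) α).le (hh0 t htI)

lemma hule (hhcont : ContinuousOn h (Set.Icc a b)) (hhmono : MonotoneOn h (Set.Icc a b))
    {x : ℝ} (hx : x ∈ Set.Icc a b) :
    (∫ t in a..x, f t ^ α * h t) ≤ (∫ t in a..x, f t ^ α) * h x := by
  have step : (∫ t in a..x, f t ^ α * h t) ≤ (∫ t in a..x, f t ^ α * h x) := by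
    apply prim_mono_int hc.hab (fahcont α h hhcont hc.fcont hc.pos)
      ((falcont α hc.fcont hc.pos).mul continuousOn_const) hx
    intro t ht
    have htI : t ∈ Set.Icc a b := ⟨ht.1, le_trans ht.2 hx.2⟩
    exact mul_le_mul_of_nonneg_left (hhmono htI hx ht.2)
      (Real.rpow_pos_of_pos (hc.pos t htI) α).le
  rwa [intervalIntegral.integral_mul_const] at step

lemma pointP (hhcont : ContinuousOn h (Set.Icc a b)) (hhmono : MonotoneOn h (Set.Icc a b))
    (hh0 : ∀ x ∈ Set.Icc a b, 0 ≤ h x) (hh1 : ∀ x ∈ Set.Icc a b, h x ≤ 1)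
    (hαle : α ≤ (n:ℝ)/((n:ℝ)-1)) {x : ℝ} (hx : x ∈ Set.Icc a b) :
    (if 0 ≤ α then f a ^ (n+1) else (f a)^((n:ℝ)+1-α) * (f b)^α) * h a ^ (n-1) /
        iteratedDerivWithin (n-1) f (Set.Icc a b) a
      + (((n:ℝ)+1-α) * (if α ≤ 1 then f a else f b)^((n:ℝ)*(1-α)) / ((n-1).factorial : ℝ)) *
        (∫ t in a..x, f t ^ α * h t)^(n-1) * f x ^ α * h x
    ≤ f x ^ (n+1) * h x ^ (n-1) / iteratedDerivWithin (n-1) f (Set.Icc a b) x := by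
  have hn := hc.hn
  have hn2 : (2:ℝ) ≤ (n:ℝ) := by exact_mod_cast hn
  have hαn : α ≤ (n:ℝ) := by
    have h1 : (0:ℝ) < (n:ℝ) - 1 := by linarith
    have h2 : α * ((n:ℝ) - 1) ≤ (n:ℝ) := by
      rw [← le_div_iff₀ h1]; exact hαle
    rcases le_or_gt α 1 with h3 | h3
    · linarith
    · calc α = α * 1 := by ring
        _ ≤ α * ((n:ℝ) - 1) := by
            apply mul_le_mul_of_nonneg_left (by linarith) (by linarith)
        _ ≤ (n:ℝ) := h2
  have haI : a ∈ Set.Icc a b := Set.left_mem_Icc.2 hc.hab.le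
  have hA := hc.fal
  have hF := hc.pos x hx
  have hga := hc.gpos a haI
  have hgx := hc.gpos x hx
  have hgle : iteratedDerivWithin (n-1) f (Set.Icc a b) x
      ≤ iteratedDerivWithin (n-1) f (Set.Icc a b) a := hc.ganti haI hx hx.1
  set E := ((n:ℝ)+1-α) * (if α ≤ 1 then f a else f b)^((n:ℝ)*(1-α)) / ((n-1).factorial : ℝ)
    with hE
  have hE0 : 0 ≤ E := by
    have h1 : (0:ℝ) ≤ (n:ℝ)+1-α := by linarith
    have h2 : (0:ℝ) ≤ (if α ≤ 1 then f a else f b)^((n:ℝ)*(1-α)) := by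
      apply Real.rpow_nonneg
      split
      · exact hA.le
      · exact (hc.pos b (Set.right_mem_Icc.2 hc.hab.le)).le
    positivity
  set KK := if 0 ≤ α then f a ^ (n+1) else (f a)^((n:ℝ)+1-α) * (f b)^α with hKK
  have hKK0 : 0 ≤ KK := by
    rw [hKK]; split
    · positivity
    · exact mul_nonneg (Real.rpow_nonneg hA.le _)
        (Real.rpow_nonneg (hc.pos b (Set.right_mem_Icc.2 hc.hab.le)).le _)
  set W := ∫ t in a..x, f t ^ α with hW
  set u := ∫ t in a..x, f t ^ α * h t with hu
  set gx := iteratedDerivWithin (n-1) f (Set.Icc a b) x with hgx'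
  set ga := iteratedDerivWithin (n-1) f (Set.Icc a b) a with hga'
  -- E-combined inequality
  have hEE : E * W^(n-1) * f x ^ α * gx ≤ f x ^ (n+1) - KK := by
    rcases le_or_gt 0 α with hpos | hneg
    · have := hc.Epos α hpos hαn hx
      rw [hKK, if_pos hpos]
      rw [hE]
      exact this
    · have := hc.Eneg α hneg hx
      have hif : (if α ≤ 1 then f a else f b) = f a := if_pos (by linarith)
      rw [hE, hif]
      rw [hKK, if_neg (not_le.2 hneg)]
      have hBα : (f b)^α ≤ (f x)^α :=
        Real.rpow_le_rpow_of_nonpos hF (hc.fbound hx).2 hneg.le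
      have : (f a)^((n:ℝ)+1-α) * (f b)^α ≤ (f a)^((n:ℝ)+1-α) * (f x)^α :=
        mul_le_mul_of_nonneg_left hBα (Real.rpow_nonneg hA.le _)
      linarith [hc.Eneg α hneg hx]
  -- pieces
  have hhx0 : 0 ≤ h x := hh0 x hx
  have hhxpow : 0 ≤ h x ^ (n-1) := pow_nonneg hhx0 _
  have hstep1 : KK * h a ^ (n-1) / ga + E * W^(n-1) * f x ^ α * h x ^ (n-1)
      ≤ f x ^ (n+1) * h x ^ (n-1) / gx := by
    have hEE' : KK + E * W^(n-1) * f x ^ α * gx ≤ f x ^ (n+1) := by linarith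
    have hdiv : (KK + E * W^(n-1) * f x ^ α * gx) * h x ^ (n-1) / gx
        ≤ f x ^ (n+1) * h x ^ (n-1) / gx := by
      apply (div_le_div_iff_of_pos_right hgx).2
      exact mul_le_mul_of_nonneg_right hEE' hhxpow
    have hexpand : (KK + E * W^(n-1) * f x ^ α * gx) * h x ^ (n-1) / gx
        = KK * h x ^ (n-1) / gx + E * W^(n-1) * f x ^ α * h x ^ (n-1) := by
      field_simp
    have hKKd : KK * h a ^ (n-1) / ga ≤ KK * h x ^ (n-1) / gx := by
      have hfrac : h a ^ (n-1) / ga ≤ h x ^ (n-1) / gx := by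
        apply div_le_div₀ hhxpow _ hgx hgle
        exact pow_le_pow_left₀ (hh0 a haI) (hhmono haI hx hx.1) _
      calc KK * h a ^ (n-1) / ga = KK * (h a ^ (n-1) / ga) := by ring
        _ ≤ KK * (h x ^ (n-1) / gx) := mul_le_mul_of_nonneg_left hfrac hKK0
        _ = KK * h x ^ (n-1) / gx := by ring
    rw [hexpand] at hdiv
    linarith
  have hstep2 : E * u^(n-1) * f x ^ α * h x ≤ E * W^(n-1) * f x ^ α * h x ^ (n-1) := by
    have hu0 : 0 ≤ u := hc.hunonneg α h hh0 hx
    have huW : u ≤ W * h x := hc.hule α h hhcont hhmono hx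
    have hupow : u^(n-1) ≤ W^(n-1) * h x ^ (n-1) := by
      calc u^(n-1) ≤ (W * h x)^(n-1) := pow_le_pow_left₀ hu0 huW _
        _ = W^(n-1) * h x ^ (n-1) := mul_pow _ _ _
    have hW0 : (0:ℝ) ≤ W^(n-1) := pow_nonneg (hc.wnonneg α hx) _
    have huh : u^(n-1) * h x ≤ W^(n-1) * h x ^ (n-1) := by
      calc u^(n-1) * h x ≤ (W^(n-1) * h x ^ (n-1)) * h x :=
            mul_le_mul_of_nonneg_right hupow hhx0
        _ ≤ (W^(n-1) * h x ^ (n-1)) * 1 :=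
            mul_le_mul_of_nonneg_left (hh1 x hx) (mul_nonneg hW0 hhxpow)
        _ = W^(n-1) * h x ^ (n-1) := mul_one _
    have hcoef : 0 ≤ E * f x ^ α := mul_nonneg hE0 (Real.rpow_pos_of_pos hF α).le
    calc E * u^(n-1) * f x ^ α * h x = (E * f x ^ α) * (u^(n-1) * h x) := by ring
      _ ≤ (E * f x ^ α) * (W^(n-1) * h x ^ (n-1)) := mul_le_mul_of_nonneg_left huh hcoef
      _ = E * W^(n-1) * f x ^ α * h x ^ (n-1) := by ring
  linarith

end H

end Alpha

end Ctx

theorem stmt4 (a b : ℝ) (hab : a < b) (n : ℕ) (hn : 2 ≤ n)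
    (f : ℝ → ℝ) (hf_pos : ∀ x ∈ Set.Icc a b, 0 < f x)
    (hf_diff : ∀ i < n,
      DifferentiableOn ℝ (iteratedDerivWithin i f (Set.Icc a b)) (Set.Icc a b))
    (hf_nonneg : ∀ i, 1 ≤ i → i ≤ n - 2 → ∀ x ∈ Set.Icc a b,
      0 ≤ iteratedDerivWithin i f (Set.Icc a b) x)
    (hf_pos' : ∀ x ∈ Set.Icc a b, 0 < iteratedDerivWithin (n - 1) f (Set.Icc a b) x)
    (hf_np : ∀ x ∈ Set.Icc a b, iteratedDerivWithin n f (Set.Icc a b) x ≤ 0)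
    (h : ℝ → ℝ) (hD : DPlus a b h ∨ DMinus a b h)
    (hh_mono : MonotoneOn h (Set.Icc a b))
    (hh_bdd : ∀ x ∈ Set.Icc a b, 0 ≤ h x ∧ h x ≤ 1)
    (α : ℝ) (hα : α ≤ (n : ℝ) / ((n : ℝ) - 1)) :
    (b - a) *
        (if 0 ≤ α then f a ^ (n + 1) else f a ^ ((n : ℝ) + 1 - α) * f b ^ α) *
        h a ^ (n - 1) / iteratedDerivWithin (n - 1) f (Set.Icc a b) a +
      ((n : ℝ) + 1 - α) *
        ((if α ≤ 1 then f a else f b) ^ ((n : ℝ) * (1 - α)) / (n.factorial : ℝ)) *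
        (∫ x in a..b, f x ^ α * h x) ^ n ≤
    ∫ x in a..b, f x ^ (n + 1) * h x ^ (n - 1) /
      iteratedDerivWithin (n - 1) f (Set.Icc a b) x := by
  have hc : Ctx a b n f := ⟨hab, hn, hf_pos, hf_diff, hf_nonneg, hf_pos', hf_np⟩
  have hhcont : ContinuousOn h (Set.Icc a b) := by
    rcases hD with hD | hD <;> exact hD.1
  have hh0 : ∀ x ∈ Set.Icc a b, 0 ≤ h x := fun x hx => (hh_bdd x hx).1
  have hh1 : ∀ x ∈ Set.Icc a b, h x ≤ 1 := fun x hx => (hh_bdd x hx).2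
  set KK := if 0 ≤ α then f a ^ (n+1) else (f a)^((n:ℝ)+1-α) * (f b)^α with hKK
  set E := ((n:ℝ)+1-α) * (if α ≤ 1 then f a else f b)^((n:ℝ)*(1-α)) / ((n-1).factorial : ℝ)
    with hE
  set g := iteratedDerivWithin (n-1) f (Set.Icc a b) with hg
  set u := fun x => ∫ t in a..x, f t ^ α * h t with hu
  have hfah : ContinuousOn (fun t => f t ^ α * h t) (Set.Icc a b) :=
    Ctx.fahcont α h hhcont hc.fcont hc.pos
  have hucont : ContinuousOn u (Set.Icc a b) := prim_cont hab hfah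
  -- continuity of both integrands
  have hΦcont : ContinuousOn
      (fun x => KK * h a ^ (n-1) / g a + E * (u x)^(n-1) * f x ^ α * h x) (Set.Icc a b) := by
    apply continuousOn_const.add
    exact (((continuousOn_const.mul (hucont.pow _)).mul
      (Ctx.falcont α hc.fcont hc.pos)).mul hhcont)
  have hΨcont : ContinuousOn
      (fun x => f x ^ (n+1) * h x ^ (n-1) / g x) (Set.Icc a b) := by
    apply ContinuousOn.div ((hc.fcont.pow _).mul (hhcont.pow _)) hc.gcont
    exact fun x hx => (hc.gpos x hx).ne'
  have hΦint : IntervalIntegrable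
      (fun x => KK * h a ^ (n-1) / g a + E * (u x)^(n-1) * f x ^ α * h x) volume a b := by
    apply ContinuousOn.intervalIntegrable
    rwa [Set.uIcc_of_le hab.le]
  have hΨint : IntervalIntegrable
      (fun x => f x ^ (n+1) * h x ^ (n-1) / g x) volume a b := by
    apply ContinuousOn.intervalIntegrable
    rwa [Set.uIcc_of_le hab.le]
  -- Step A : integral comparison
  have hmono : (∫ x in a..b, (KK * h a ^ (n-1) / g a + E * (u x)^(n-1) * f x ^ α * h x))
      ≤ ∫ x in a..b, f x ^ (n+1) * h x ^ (n-1) / g x := by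
    apply intervalIntegral.integral_mono_on hab.le hΦint hΨint
    intro x hx
    exact hc.pointP α h hhcont hh_mono hh0 hh1 hα hx
  -- Step B : compute left integral
  have hint2 : IntervalIntegrable (fun x => E * (u x)^(n-1) * f x ^ α * h x) volume a b := by
    apply ContinuousOn.intervalIntegrable
    rw [Set.uIcc_of_le hab.le]
    exact (((continuousOn_const.mul (hucont.pow _)).mul
      (Ctx.falcont α hc.fcont hc.pos)).mul hhcont)
  have hsplit : (∫ x in a..b, (KK * h a ^ (n-1) / g a + E * (u x)^(n-1) * f x ^ α * h x))
      = (b-a) * (KK * h a ^ (n-1) / g a) + ∫ x in a..b, E * (u x)^(n-1) * f x ^ α * h x := by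
    rw [intervalIntegral.integral_add intervalIntegrable_const hint2,
      intervalIntegral.integral_const, smul_eq_mul]
  -- Step C : FTC for u^n
  have hFTC : (∫ x in a..b, ((n:ℕ):ℝ) * (u x)^(n-1) * (f x ^ α * h x))
      = (u b)^n - (u a)^n := by
    apply intervalIntegral.integral_eq_sub_of_hasDerivAt_of_le hab.le
    · exact (hucont.pow n)
    · intro x hx
      exact (prim_deriv hab hfah hx).pow n
    · apply ContinuousOn.intervalIntegrable
      rw [Set.uIcc_of_le hab.le]
      exact (continuousOn_const.mul (hucont.pow _)).mul hfah
  have hua : u a = 0 := intervalIntegral.integral_same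
  have hn0 : (0:ℝ) < (n:ℝ) := by positivity
  have hint3 : (∫ x in a..b, E * (u x)^(n-1) * f x ^ α * h x)
      = E * ((u b)^n / (n:ℝ)) := by
    have e1 : (∫ x in a..b, E * (u x)^(n-1) * f x ^ α * h x)
        = (E / (n:ℝ)) * ∫ x in a..b, ((n:ℕ):ℝ) * (u x)^(n-1) * (f x ^ α * h x) := by
      rw [← intervalIntegral.integral_const_mul]
      apply intervalIntegral.integral_congr
      intro x hx
      have : (E / (n:ℝ)) * (((n:ℕ):ℝ) * (u x)^(n-1) * (f x ^ α * h x))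
          = E * (u x)^(n-1) * f x ^ α * h x := by
        field_simp
      exact this.symm
    rw [e1, hFTC, hua, zero_pow (show n ≠ 0 by omega), sub_zero]
    field_simp
  -- final arithmetic
  have hfact : (n.factorial : ℝ) = (n:ℝ) * ((n-1).factorial : ℝ) := by
    have h1 : n = (n-1) + 1 := by omega
    rw [h1, Nat.factorial_succ]
    push_cast
    ring
  have hgoalL : (b - a) * KK * h a ^ (n - 1) / g a +
      ((n : ℝ) + 1 - α) * ((if α ≤ 1 then f a else f b) ^ ((n : ℝ) * (1 - α)) / (n.factorial : ℝ)) *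
        (u b) ^ n
      = (b-a) * (KK * h a ^ (n-1) / g a) + E * ((u b)^n / (n:ℝ)) := by
    rw [hE, hfact]
    have hnf : ((n-1).factorial : ℝ) ≠ 0 := by positivity
    field_simp
  rw [← hu] at *
  calc (b - a) * KK * h a ^ (n - 1) / g a +
      ((n : ℝ) + 1 - α) * ((if α ≤ 1 then f a else f b) ^ ((n : ℝ) * (1 - α)) / (n.factorial : ℝ)) *
        (u b) ^ n
      = (b-a) * (KK * h a ^ (n-1) / g a) + E * ((u b)^n / (n:ℝ)) := hgoalL
    _ = (∫ x in a..b, (KK * h a ^ (n-1) / g a + E * (u x)^(n-1) * f x ^ α * h x)) := by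
        rw [hsplit, hint3]
    _ ≤ _ := hmono
end
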